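/- arXiv:2001.11281 — 7 statements merged into one kernel-verified Lean document; each statement's English description precedes it below -/
import Mathlib

section
/- There exists a compact metrizable space X such that every continuum (nonempty compact connected metrizable space) is homeomorphic to at least one connected component of X. -/
open TopologicalSpace Metric Filter BoundedContinuousFunction

noncomputable section UnivCompAux

/-! ### A continuous injection of any compact metric space into the Hilbert cube -/

noncomputable def squash (t : ℝ) : unitInterval :=
  ⟨Real.arctan t / Real.pi + 1/2, by
    have hp := Real.pi_pos
    have h1 := Real.neg_pi_div_two_lt_arctan t
    have h2 := Real.arctan_lt_pi_div_two t
    have hq : Real.arctan t / Real.pi * Real.pi = Real.arctan t :=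
      div_mul_cancel₀ _ (ne_of_gt hp)
    constructor <;> nlinarith [mul_pos hp hp]⟩

lemma squash_cont : Continuous squash :=
  Continuous.subtype_mk ((Real.continuous_arctan.div_const _).add continuous_const) _

lemma squash_inj : Function.Injective squash := by
  intro a b h
  have h1 := congrArg Subtype.val h
  simp only [squash] at h1
  have h2 : Real.arctan a / Real.pi = Real.arctan b / Real.pi := by linarith
  exact Real.arctan_injective (by field_simp at h2; exact h2)

/-- Every compact metric space admits a continuous injection into the Hilbert cube. -/
lemma exists_inj_cube (X : Type) [MetricSpace X] [CompactSpace X] :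
    ∃ f : X → (ℕ → unitInterval), Continuous f ∧ Function.Injective f := by
  obtain ⟨g, hg⟩ := exists_embedding_l_infty X
  refine ⟨fun x n => squash (g x n), ?_, ?_⟩
  · apply continuous_pi
    intro n
    exact squash_cont.comp ((continuous_eval_const n).comp hg.continuous)
  · intro a b h
    apply hg.injective
    ext n
    exact squash_inj (congrFun h n)

/-! ### Binary expansions: a continuous surjection from Cantor space onto `[0,1]` -/

noncomputable def bfun (b : ℕ → Bool) (n : ℕ) : ℝ := if b n then (1/2 : ℝ)^(n+1) else 0

lemma bfun_nonneg (b : ℕ → Bool) (n : ℕ) : 0 ≤ bfun b n := by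
  unfold bfun; split <;> positivity

lemma bfun_le (b : ℕ → Bool) (n : ℕ) : bfun b n ≤ (1/2 : ℝ)^(n+1) := by
  unfold bfun; split
  · exact le_refl _
  · positivity

lemma summable_half : Summable (fun n : ℕ => (1/2 : ℝ)^(n+1)) := by
  simpa [pow_succ] using summable_geometric_two.mul_right (1/2 : ℝ)

lemma tsum_half : ∑' n : ℕ, (1/2 : ℝ)^(n+1) = 1 := by
  have h : (fun n : ℕ => (1/2:ℝ)^(n+1)) = fun n : ℕ => 1/2/2^n := by
    funext n
    rw [pow_succ, div_pow, one_pow]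
    ring
  rw [h]
  exact tsum_geometric_two' 1

lemma bfun_summable (b : ℕ → Bool) : Summable (bfun b) :=
  Summable.of_nonneg_of_le (bfun_nonneg b) (bfun_le b) summable_half

noncomputable def bval (b : ℕ → Bool) : unitInterval :=
  ⟨∑' n, bfun b n, tsum_nonneg (bfun_nonneg b),
   by
     calc ∑' n, bfun b n ≤ ∑' n : ℕ, (1/2:ℝ)^(n+1) :=
            Summable.tsum_le_tsum (bfun_le b) (bfun_summable b) summable_half
       _ = 1 := tsum_half⟩

lemma bval_cont : Continuous bval := by
  apply Continuous.subtype_mk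
  apply continuous_tsum (u := fun n : ℕ => (1/2:ℝ)^(n+1))
  · intro n
    exact Continuous.comp (g := fun v : Bool => if v then (1/2:ℝ)^(n+1) else 0)
      (continuous_of_discreteTopology) (continuous_apply n)
  · exact summable_half
  · intro n b
    rw [Real.norm_eq_abs, abs_of_nonneg (bfun_nonneg b n)]
    exact bfun_le b n

noncomputable def brem (x : ℝ) : ℕ → ℝ
  | 0 => x
  | n+1 => if (1/2:ℝ)^(n+1) ≤ brem x n then brem x n - (1/2)^(n+1) else brem x n

noncomputable def bdig (x : ℝ) (n : ℕ) : Bool := decide ((1/2:ℝ)^(n+1) ≤ brem x n)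

lemma brem_bounds (x : ℝ) (hx : 0 ≤ x) (hx1 : x ≤ 1) (n : ℕ) :
    0 ≤ brem x n ∧ brem x n ≤ (1/2:ℝ)^n := by
  induction n with
  | zero => simpa [brem] using ⟨hx, hx1⟩
  | succ n ih =>
    rw [brem]
    split
    · constructor
      · linarith [‹(1/2:ℝ)^(n+1) ≤ brem x n›]
      · have : (1/2:ℝ)^(n+1) = (1/2)^n * (1/2) := pow_succ _ _
        nlinarith [ih.2]
    · refine ⟨ih.1, ?_⟩
      push_neg at *
      linarith [‹brem x n < (1/2:ℝ)^(n+1)›]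

lemma bsum_eq (x : ℝ) (n : ℕ) :
    ∑ k ∈ Finset.range n, bfun (bdig x) k = x - brem x n := by
  induction n with
  | zero => simp [brem]
  | succ n ih =>
    rw [Finset.sum_range_succ, ih]
    have : bfun (bdig x) n = brem x n - brem x (n+1) := by
      rw [bfun, bdig, brem]
      rcases le_or_gt ((1/2:ℝ)^(n+1)) (brem x n) with h | h
      · rw [if_pos (decide_eq_true h), if_pos h]
        ring
      · rw [if_neg (by simpa using not_le.2 h), if_neg (not_le.2 h)]
        ring
    rw [this]
    ring

lemma bval_surj : Function.Surjective bval := by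
  intro y
  refine ⟨bdig y.1, Subtype.ext ?_⟩
  show ∑' n, bfun (bdig y.1) n = y.1
  have hs := bfun_summable (bdig y.1)
  have h1 : Tendsto (fun n => ∑ k ∈ Finset.range n, bfun (bdig y.1) k) atTop
      (nhds (∑' n, bfun (bdig y.1) n)) := hs.hasSum.tendsto_sum_nat
  have hr : Tendsto (fun n => brem y.1 n) atTop (nhds 0) := by
    apply squeeze_zero (fun n => (brem_bounds y.1 y.2.1 y.2.2 n).1)
      (fun n => (brem_bounds y.1 y.2.1 y.2.2 n).2)
    exact tendsto_pow_atTop_nhds_zero_of_lt_one (by norm_num) (by norm_num)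
  have h2 : Tendsto (fun n => ∑ k ∈ Finset.range n, bfun (bdig y.1) k) atTop (nhds y.1) := by
    simp only [bsum_eq]
    simpa using tendsto_const_nhds.sub hr
  exact tendsto_nhds_unique h1 h2

/-! ### The Hilbert cube and the hyperspace -/

/-- The Hilbert cube. -/
abbrev Qcube : Type := ℕ → unitInterval

noncomputable instance : MetricSpace Qcube := metrizableSpaceMetric Qcube

/-- The Cantor-like base space. -/
abbrev Cbase : Type := ℕ → ℕ → Bool

/-- The continuous surjection from the Cantor-like space onto the Hilbert cube. -/
noncomputable def phi (c : Cbase) : Qcube := fun n => bval (c n)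

lemma phi_cont : Continuous phi :=
  continuous_pi fun n => bval_cont.comp (continuous_apply n)

lemma phi_surj : Function.Surjective phi := by
  intro q
  choose b hb using fun n => bval_surj (q n)
  exact ⟨b, funext hb⟩

/-- The hyperspace of nonempty compact subsets of the Hilbert cube. -/
abbrev Hyp : Type := NonemptyCompacts Qcube

noncomputable def iotaH : Hyp → Qcube := (exists_inj_cube Hyp).choose

lemma iotaH_cont : Continuous iotaH := (exists_inj_cube Hyp).choose_spec.1
lemma iotaH_inj : Function.Injective iotaH := (exists_inj_cube Hyp).choose_spec.2

/-- `Hyp` is homeomorphic to the range of `iotaH`. -/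
noncomputable def hypHomeo : Hyp ≃ₜ Set.range iotaH :=
  Continuous.homeoOfEquivCompactToT2
    (f := Equiv.ofInjective iotaH iotaH_inj) (iotaH_cont.subtype_mk _)

/-- The base space: preimage of the embedded hyperspace. -/
abbrev Tbase : Type := ↥(phi ⁻¹' Set.range iotaH)

lemma range_iotaH_closed : IsClosed (Set.range iotaH) :=
  (isCompact_range iotaH_cont).isClosed

instance : CompactSpace Tbase :=
  isCompact_iff_compactSpace.1 ((range_iotaH_closed.preimage phi_cont).isCompact)

/-- The coding map from the base space onto the hyperspace. -/
noncomputable def gmap (t : Tbase) : Hyp := hypHomeo.symm ⟨phi t.1, t.2⟩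

lemma gmap_cont : Continuous gmap :=
  hypHomeo.symm.continuous.comp ((phi_cont.comp continuous_subtype_val).subtype_mk _)

lemma iotaH_gmap (t : Tbase) : iotaH (gmap t) = phi t.1 :=
  congrArg Subtype.val (hypHomeo.apply_symm_apply ⟨phi t.1, t.2⟩)

lemma gmap_surj : Function.Surjective gmap := by
  intro K
  obtain ⟨c, hc⟩ := phi_surj (iotaH K)
  refine ⟨⟨c, ⟨K, hc.symm⟩⟩, iotaH_inj ?_⟩
  rw [iotaH_gmap]
  exact hc

/-! ### The universal space -/

/-- The universal compact metrizable space. -/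
def XunivSet : Set (Tbase × Qcube) := {p | p.2 ∈ (gmap p.1 : Set Qcube)}

abbrev Xuniv : Type := ↥XunivSet

lemma xuniv_closed : IsClosed XunivSet := by
  letI : MetricSpace (Tbase × Qcube) := metrizableSpaceMetric _
  apply IsSeqClosed.isClosed
  intro pn p hmem hconv
  have h1 : Tendsto (fun n => (pn n).1) atTop (nhds p.1) :=
    (continuous_fst.tendsto p).comp hconv
  have h2 : Tendsto (fun n => (pn n).2) atTop (nhds p.2) :=
    (continuous_snd.tendsto p).comp hconv
  have hg : Tendsto (fun n => gmap (pn n).1) atTop (nhds (gmap p.1)) :=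
    (gmap_cont.tendsto p.1).comp h1
  show p.2 ∈ (gmap p.1 : Set Qcube)
  have hclosed : IsClosed (gmap p.1 : Set Qcube) := (gmap p.1).isCompact.isClosed
  rw [hclosed.mem_iff_infDist_zero (gmap p.1).nonempty]
  have key : ∀ n, infDist p.2 (gmap p.1 : Set Qcube) ≤
      dist p.2 (pn n).2 + dist (gmap (pn n).1) (gmap p.1) := by
    intro n
    have hfin : EMetric.hausdorffEdist ((gmap (pn n).1 : Set Qcube)) (gmap p.1 : Set Qcube) ≠ ⊤ :=
      hausdorffEdist_ne_top_of_nonempty_of_bounded (gmap (pn n).1).nonempty (gmap p.1).nonempty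
        (gmap (pn n).1).isCompact.isBounded (gmap p.1).isCompact.isBounded
    have h3 : infDist p.2 (gmap p.1 : Set Qcube) ≤
        infDist ((pn n).2) (gmap p.1 : Set Qcube) + dist p.2 (pn n).2 :=
      infDist_le_infDist_add_dist
    have h4 : infDist ((pn n).2) (gmap p.1 : Set Qcube) ≤
        hausdorffDist ((gmap (pn n).1 : Set Qcube)) (gmap p.1 : Set Qcube) :=
      infDist_le_hausdorffDist_of_mem (hmem n) hfin
    rw [NonemptyCompacts.dist_eq]
    linarith
  have hA : Tendsto (fun n => dist p.2 (pn n).2 + dist (gmap (pn n).1) (gmap p.1))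
      atTop (nhds 0) := by
    have hA1 : Tendsto (fun n => dist p.2 (pn n).2) atTop (nhds 0) := by
      simpa [dist_comm] using tendsto_iff_dist_tendsto_zero.1 h2
    have hA2 : Tendsto (fun n => dist (gmap (pn n).1) (gmap p.1)) atTop (nhds 0) :=
      tendsto_iff_dist_tendsto_zero.1 hg
    simpa using hA1.add hA2
  have hle : infDist p.2 (gmap p.1 : Set Qcube) ≤ 0 :=
    ge_of_tendsto hA (Eventually.of_forall key)
  exact le_antisymm hle infDist_nonneg

instance : CompactSpace Xuniv :=
  isCompact_iff_compactSpace.1 (xuniv_closed.isCompact)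

end UnivCompAux

/-- There exists a compact metrizable space `X` such that every continuum
(nonempty compact connected metrizable space) is homeomorphic to at least one
connected component of `X`. (Stated as a `Prop`-valued inductive to existentially
quantify over a type together with its topology.) -/
inductive ExistsUniversalComponentSpace : Prop where
  | intro (X : Type) [tX : TopologicalSpace X]
      (hcomp : CompactSpace X) (hmetr : MetrizableSpace X)
      (huniv : ∀ (C : Type) [TopologicalSpace C] [CompactSpace C] [ConnectedSpace C]
        [MetrizableSpace C], ∃ x : X, Nonempty (C ≃ₜ connectedComponent x)) :
      ExistsUniversalComponentSpace

theorem stmt_0 : ExistsUniversalComponentSpace := by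
  refine ExistsUniversalComponentSpace.intro Xuniv inferInstance inferInstance ?_
  intro C _ _ _ _
  letI : MetricSpace C := metrizableSpaceMetric C
  obtain ⟨e, econt, einj⟩ := exists_inj_cube C
  set K : Hyp := ⟨⟨Set.range e, isCompact_range econt⟩, Set.range_nonempty e⟩ with hK
  obtain ⟨t, ht⟩ := gmap_surj K
  have hKset : (gmap t : Set Qcube) = Set.range e := by rw [ht]; rfl
  -- the canonical map from C into Xuniv
  have hmem : ∀ a : C, ((t, e a) : Tbase × Qcube).2 ∈ (gmap (t, e a).1 : Set Qcube) := by
    intro a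
    rw [hKset]
    exact ⟨a, rfl⟩
  let ψ : C → Xuniv := fun a => ⟨(t, e a), hmem a⟩
  have ψcont : Continuous ψ := (continuous_const.prodMk econt).subtype_mk _
  have ψinj : Function.Injective ψ := by
    intro a b h
    apply einj
    have := congrArg (fun p : Xuniv => p.1.2) h
    exact this
  let p₀ : Xuniv := ψ (Classical.arbitrary C)
  have hrange : Set.range ψ = connectedComponent p₀ := by
    apply Set.Subset.antisymm
    · exact (isConnected_range ψcont).isPreconnected.subset_connectedComponent
        ⟨Classical.arbitrary C, rfl⟩
    · intro q hq
      -- first coordinate of q is t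
      have hfst : (q.1.1 : Cbase) = (t : Cbase) := by
        have hπ : Continuous (fun p : Xuniv => (p.1.1 : Cbase)) :=
          continuous_subtype_val.comp (continuous_fst.comp continuous_subtype_val)
        have himg : (fun p : Xuniv => (p.1.1 : Cbase)) '' connectedComponent p₀ ⊆
            connectedComponent ((t : Cbase)) := by
          apply IsPreconnected.subset_connectedComponent
          · exact (isPreconnected_connectedComponent).image _ hπ.continuousOn
          · exact ⟨p₀, mem_connectedComponent, rfl⟩
        have := himg ⟨q, hq, rfl⟩
        rwa [(totallyDisconnectedSpace_iff_connectedComponent_singleton.1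
          inferInstance (t : Cbase)), Set.mem_singleton_iff] at this
      have hfst' : q.1.1 = t := Subtype.ext hfst
      have hq2 : (q : Tbase × Qcube).2 ∈ Set.range e := by
        have h5 : ((q : Tbase × Qcube)).2 ∈ (gmap ((q : Tbase × Qcube)).1 : Set Qcube) := q.2
        rwa [hfst', hKset] at h5
      obtain ⟨a, ha⟩ := hq2
      refine ⟨a, ?_⟩
      apply Subtype.ext
      apply Prod.ext
      · exact hfst'.symm
      · exact ha
  have homeo1 : C ≃ₜ Set.range ψ :=
    Continuous.homeoOfEquivCompactToT2 (f := Equiv.ofInjective ψ ψinj) (ψcont.subtype_mk _)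
  exact ⟨p₀, ⟨homeo1.trans (Homeomorph.setCongr hrange)⟩⟩
end

section
/- If π : X → Y is a closed continuous surjection between Polish spaces with compact fibers (a perfect map), then the set R = {π⁻¹(y) : y ∈ Y} of fibers is a Gδ subset of the hyperspace K(X). -/
open TopologicalSpace Metric Set

/-- If `π : X → Y` is a perfect map (closed continuous surjection with compact fibers)
between Polish spaces, then the set of fibers `R = {π⁻¹(y) : y ∈ Y}` is a Gδ subset of
the hyperspace `K(X)`. -/
theorem stmt_4 {X Y : Type*} [MetricSpace X] [PolishSpace X]
    [TopologicalSpace Y] [PolishSpace Y]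
    (π : X → Y) (hcont : Continuous π) (hclosed : IsClosedMap π)
    (hsurj : Function.Surjective π) (hfib : ∀ y : Y, IsCompact (π ⁻¹' {y})) :
    IsGδ {K : NonemptyCompacts X | ∃ y : Y, (K : Set X) = π ⁻¹' {y}} := by
  classical
  letI := upgradeIsCompletelyMetrizable Y
  set ε : ℕ → ℝ := fun n => 1 / (n + 1) with hεdef
  have hε : ∀ n, 0 < ε n := fun n => by positivity
  set A : Set (NonemptyCompacts X) :=
    {K | ∀ x ∈ (K : Set X), ∀ x' ∈ (K : Set X), π x = π x'} with hAdef
  set G : ℕ → Set (NonemptyCompacts X) := fun n =>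
    {K | ∀ x ∈ (K : Set X), π ⁻¹' {π x} ⊆ thickening (ε n) (K : Set X)} with hGdef
  have hfin : ∀ K K' : NonemptyCompacts X,
      EMetric.hausdorffEdist (K : Set X) (K' : Set X) ≠ ⊤ := fun K K' =>
    hausdorffEdist_ne_top_of_nonempty_of_bounded K.nonempty K'.nonempty
      K.isCompact.isBounded K'.isCompact.isBounded
  -- `A` is closed
  have hA : IsClosed A := by
    rw [← isOpen_compl_iff, Metric.isOpen_iff]
    rintro K hK
    simp only [hAdef, mem_compl_iff, mem_setOf_eq, not_forall] at hK
    obtain ⟨x, hx, x', hx', hne⟩ := hK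
    obtain ⟨V, V', hV, hV', hxV, hx'V', hVV'⟩ := t2_separation hne
    obtain ⟨r, hr, hball⟩ := Metric.isOpen_iff.1 (hV.preimage hcont) x hxV
    obtain ⟨r', hr', hball'⟩ := Metric.isOpen_iff.1 (hV'.preimage hcont) x' hx'V'
    refine ⟨min r r', lt_min hr hr', fun K' hK' => ?_⟩
    rw [mem_ball, NonemptyCompacts.dist_eq, hausdorffDist_comm] at hK'
    have hd : hausdorffDist (K : Set X) (K' : Set X) < min r r' := hK'
    obtain ⟨z, hz, hdz⟩ := exists_dist_lt_of_hausdorffDist_lt hx hd (hfin K K')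
    obtain ⟨z', hz', hdz'⟩ := exists_dist_lt_of_hausdorffDist_lt hx' hd (hfin K K')
    simp only [hAdef, mem_compl_iff, mem_setOf_eq, not_forall]
    refine ⟨z, hz, z', hz', fun h => ?_⟩
    have hzV : z ∈ π ⁻¹' V := hball (by rw [mem_ball, dist_comm]; exact hdz.trans_le (min_le_left _ _))
    have hz'V' : z' ∈ π ⁻¹' V' := hball' (by rw [mem_ball, dist_comm]; exact hdz'.trans_le (min_le_right _ _))
    exact hVV'.ne_of_mem hzV (h ▸ hz'V') rfl
  -- each `G n` is open
  have hG : ∀ n, IsOpen (G n) := by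
    intro n
    rw [Metric.isOpen_iff]
    intro K hK
    -- for each point `x` of `K`, squeeze its fiber into a strictly smaller thickening
    have key : ∀ x ∈ (K : Set X), ∃ e : ℝ, e < ε n ∧ ∃ V : Set Y, IsOpen V ∧ π x ∈ V ∧
        π ⁻¹' V ⊆ thickening e (K : Set X) := by
      intro x hx
      have hFne : (π ⁻¹' {π x}).Nonempty := ⟨x, rfl⟩
      obtain ⟨z₀, hz₀, hz₀max⟩ := (hfib (π x)).exists_isMaxOn hFne
        (continuous_infDist_pt (K : Set X)).continuousOn
      have hz₀lt : infDist z₀ (K : Set X) < ε n := by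
        have := hK x hx hz₀
        rwa [mem_thickening_iff_infDist_lt K.nonempty] at this
      set e := (infDist z₀ (K : Set X) + ε n) / 2 with hedef
      have he₁ : infDist z₀ (K : Set X) < e := by rw [hedef]; linarith
      have he₂ : e < ε n := by rw [hedef]; linarith
      have hFsub : π ⁻¹' {π x} ⊆ thickening e (K : Set X) := by
        intro z hz
        rw [mem_thickening_iff_infDist_lt K.nonempty]
        exact lt_of_le_of_lt (hz₀max hz) he₁
      -- use closedness of `π` to find a saturated open neighborhood
      refine ⟨e, he₂, (π '' (thickening e (K : Set X))ᶜ)ᶜ,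
        (hclosed _ isOpen_thickening.isClosed_compl).isOpen_compl, ?_, ?_⟩
      · intro hmem
        obtain ⟨z, hz, hπz⟩ := hmem
        exact hz (hFsub (by simp [hπz]))
      · intro z hz
        by_contra hzc
        exact hz ⟨z, hzc, rfl⟩
    choose! e he V hVopen hVmem hVsub using key
    -- finite subcover of `K` by the saturated open sets
    obtain ⟨t, htsub⟩ := K.isCompact.elim_finite_subcover
      (fun i : (K : Set X) => π ⁻¹' V i) (fun i => (hVopen i i.2).preimage hcont)
      (fun x hx => mem_iUnion.2 ⟨⟨x, hx⟩, hVmem x hx⟩)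
    have htne : t.Nonempty := by
      obtain ⟨x, hx⟩ := K.nonempty
      obtain ⟨i, hit, -⟩ := Set.mem_iUnion₂.1 (htsub hx)
      exact ⟨i, hit⟩
    set W : Set X := ⋃ i ∈ t, π ⁻¹' V i with hWdef
    have hWopen : IsOpen W := isOpen_biUnion fun i _ => (hVopen i i.2).preimage hcont
    obtain ⟨r, hr, hrsub⟩ := K.isCompact.exists_thickening_subset_open hWopen htsub
    set m : ℝ := t.inf' htne fun i => ε n - e i with hmdef
    have hm : 0 < m := by
      rw [hmdef, Finset.lt_inf'_iff]
      exact fun i hi => sub_pos.2 (he i i.2)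
    refine ⟨min r m, lt_min hr hm, fun K' hK' => ?_⟩
    rw [mem_ball, NonemptyCompacts.dist_eq, hausdorffDist_comm] at hK'
    have hd : hausdorffDist (K : Set X) (K' : Set X) < min r m := hK'
    intro x' hx' z hz
    -- `x' ∈ K'` is in `W`
    have hx'W : x' ∈ W := by
      apply hrsub
      rw [mem_thickening_iff_infDist_lt K.nonempty]
      calc infDist x' (K : Set X)
          ≤ hausdorffDist (K' : Set X) (K : Set X) :=
            infDist_le_hausdorffDist_of_mem hx' (hfin K' K)
        _ = hausdorffDist (K : Set X) (K' : Set X) := hausdorffDist_comm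
        _ < r := hd.trans_le (min_le_left _ _)
    obtain ⟨i, hit, hx'V⟩ := Set.mem_iUnion₂.1 hx'W
    -- the fiber through `x'` lands in `thickening (e i) K`
    have hzthick : z ∈ thickening (e i) (K : Set X) := by
      apply hVsub i i.2
      have : π z = π x' := hz
      rw [mem_preimage, this]
      exact hx'V
    -- transfer to a thickening of `K'`
    obtain ⟨w, hw, hzw⟩ := mem_thickening_iff.1 hzthick
    rw [mem_thickening_iff_infDist_lt K'.nonempty]
    have h1 : infDist z (K' : Set X) ≤ infDist w (K' : Set X) + dist z w :=
      infDist_le_infDist_add_dist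
    have h2 : infDist w (K' : Set X) ≤ hausdorffDist (K : Set X) (K' : Set X) :=
      infDist_le_hausdorffDist_of_mem hw (hfin K K')
    have h3 : hausdorffDist (K : Set X) (K' : Set X) < ε n - e i :=
      hd.trans_le ((min_le_right _ _).trans (by rw [hmdef]; exact Finset.inf'_le _ hit))
    linarith
  -- the set equality
  have heq : {K : NonemptyCompacts X | ∃ y : Y, (K : Set X) = π ⁻¹' {y}} = A ∩ ⋂ n, G n := by
    ext K
    simp only [mem_setOf_eq, mem_inter_iff, mem_iInter]
    constructor
    · rintro ⟨y, hy⟩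
      constructor
      · intro x hx x' hx'
        rw [hy] at hx hx'
        simp only [mem_preimage, mem_singleton_iff] at hx hx'
        rw [hx, hx']
      · intro n x hx
        have : π x = y := by rw [hy] at hx; exact hx
        rw [this, ← hy]
        exact self_subset_thickening (hε n) _
    · rintro ⟨hKA, hKG⟩
      obtain ⟨x₀, hx₀⟩ := K.nonempty
      refine ⟨π x₀, Set.Subset.antisymm (fun x hx => hKA x hx x₀ hx₀) fun z hz => ?_⟩
      have hthick : ∀ n, z ∈ thickening (ε n) (K : Set X) := fun n => hKG n x₀ hx₀ hz
      have hzero : infDist z (K : Set X) ≤ 0 := by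
        by_contra h
        push_neg at h
        obtain ⟨n, hn⟩ := exists_nat_one_div_lt h
        have := (mem_thickening_iff_infDist_lt K.nonempty).1 (hthick n)
        rw [hεdef] at this
        simp only at this
        linarith
      have : z ∈ closure (K : Set X) := by
        rw [mem_closure_iff_infDist_zero K.nonempty]
        exact le_antisymm hzero infDist_nonneg
      rwa [K.isCompact.isClosed.closure_eq] at this
  rw [heq]
  exact hA.isGδ.inter (IsGδ.iInter fun n => (hG n).isGδ)
end

section
/- The equivalence relation E₀ of eventual equality on the Cantor space 2^ℕ is not smooth, i.e. there is no Borel measurable map φ from 2^ℕ to a Polish space Z such that x E₀ y if and only if φ(x) = φ(y). -/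
/-- The relation `E₀` of eventual equality on the Cantor space `2^ℕ`. -/
def E0 (a b : ℕ → Bool) : Prop := ∃ m : ℕ, ∀ n ≥ m, a n = b n

/-- An equivalence relation is smooth if it is Borel reducible to the equality
relation on some Polish space. -/
inductive SmoothRel {X : Type*} [TopologicalSpace X] [MeasurableSpace X]
    (E : X → X → Prop) : Prop where
  | intro (Z : Type) [tZ : TopologicalSpace Z] [mZ : MeasurableSpace Z]
      (borelZ : BorelSpace Z) (polishZ : PolishSpace Z) (φ : X → Z)
      (meas : Measurable φ) (reduces : ∀ a b : X, (E a b ↔ φ a = φ b)) : SmoothRel E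

open MeasureTheory Set ENNReal

namespace E0NonSmooth

instance : IsTopologicalAddGroup (ZMod 2) where
  continuous_add := continuous_of_discreteTopology
  continuous_neg := continuous_of_discreteTopology

instance : BorelSpace (ZMod 2) := ⟨borel_eq_top_of_discrete.symm⟩

/-- The underlying group `(ℤ/2)^ℕ`. -/
abbrev G : Type := ℕ → ZMod 2

/-- The Haar (fair coin–flipping) probability measure on `G`. -/
noncomputable def μ : Measure G := Measure.addHaarMeasure ⊤

instance : IsProbabilityMeasure μ :=
  ⟨by
    have := Measure.addHaarMeasure_self (K₀ := (⊤ : TopologicalSpace.PositiveCompacts G))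
    rwa [TopologicalSpace.PositiveCompacts.coe_top] at this⟩

instance : μ.IsAddLeftInvariant := by
  unfold μ; infer_instance

/-- A set is `E₀`-invariant for our purposes if it is invariant under adding any
eventually-zero vector. -/
def Inv (A : Set G) : Prop :=
  ∀ v : G, (∃ m : ℕ, ∀ n ≥ m, v n = 0) → (fun x => v + x) ⁻¹' A = A

/-- The point cylinder over a finite set of coordinates. -/
def Cyl (s : Finset ℕ) (w : ∀ i : s, ZMod 2) : Set G :=
  cylinder s {w}

lemma measurableSet_cyl (s : Finset ℕ) (w : ∀ i : s, ZMod 2) :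
    MeasurableSet (Cyl s w) := by
  apply MeasurableSet.preimage (measurableSet_singleton w)
  exact measurable_pi_lambda _ fun i => measurable_pi_apply _

lemma cyl_disjoint {s : Finset ℕ} {w w' : ∀ i : s, ZMod 2} (h : w ≠ w') :
    Disjoint (Cyl s w) (Cyl s w') := by
  rw [Set.disjoint_left]
  rintro x hx hx'
  exact h (hx.symm.trans hx')

lemma iUnion_cyl (s : Finset ℕ) : (⋃ w : ∀ i : s, ZMod 2, Cyl s w) = univ := by
  refine eq_univ_iff_forall.2 fun x => ?_
  exact mem_iUnion.2 ⟨s.restrict x, rfl⟩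

/-- translating a point cylinder to another one. -/
lemma preimage_cyl (s : Finset ℕ) (w w' : ∀ i : s, ZMod 2) :
    (fun x => (fun n => if h : n ∈ s then w' ⟨n, h⟩ - w ⟨n, h⟩ else 0) + x) ⁻¹' Cyl s w'
      = Cyl s w := by
  ext x
  simp only [Cyl, cylinder, mem_preimage, mem_singleton_iff, funext_iff]
  constructor
  · intro h i
    have := h i
    rcases i with ⟨n, hn⟩
    simp only [Finset.restrict, Pi.add_apply, dif_pos hn] at this ⊢
    linear_combination this
  · intro h i
    have := h i
    rcases i with ⟨n, hn⟩
    simp only [Finset.restrict, Pi.add_apply, dif_pos hn] at this ⊢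
    linear_combination this

lemma inv_measure_inter_cyl {A : Set G} (hInv : Inv A) (s : Finset ℕ)
    (w w' : ∀ i : s, ZMod 2) : μ (A ∩ Cyl s w) = μ (A ∩ Cyl s w') := by
  set v : G := fun n => if h : n ∈ s then w' ⟨n, h⟩ - w ⟨n, h⟩ else 0 with hv
  have hvz : ∃ m : ℕ, ∀ n ≥ m, v n = 0 := by
    refine ⟨(s.sup id) + 1, fun n hn => ?_⟩
    have : n ∉ s := by
      intro hns
      have := Finset.le_sup (f := id) hns
      simp only [id] at this
      omega
    simp [hv, this]
  have key : (fun x => v + x) ⁻¹' (A ∩ Cyl s w') = A ∩ Cyl s w := by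
    rw [Set.preimage_inter, hInv v hvz, preimage_cyl]
  calc μ (A ∩ Cyl s w) = μ ((fun x => v + x) ⁻¹' (A ∩ Cyl s w')) := by rw [key]
    _ = μ (A ∩ Cyl s w') := measure_preimage_add μ v _

lemma card_mul_measure_inter_cyl {A : Set G} (hA : MeasurableSet A) (hInv : Inv A)
    (s : Finset ℕ) (w : ∀ i : s, ZMod 2) :
    (Fintype.card (∀ i : s, ZMod 2) : ℝ≥0∞) * μ (A ∩ Cyl s w) = μ A := by
  have hdecomp : A = ⋃ w' : ∀ i : s, ZMod 2, A ∩ Cyl s w' := by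
    rw [← inter_iUnion, iUnion_cyl, inter_univ]
  have hdisj : Pairwise (Function.onFun Disjoint fun w' : ∀ i : s, ZMod 2 => A ∩ Cyl s w') := by
    intro a b hab
    exact Disjoint.mono inter_subset_right inter_subset_right (cyl_disjoint hab)
  calc (Fintype.card (∀ i : s, ZMod 2) : ℝ≥0∞) * μ (A ∩ Cyl s w)
      = ∑ w' : ∀ i : s, ZMod 2, μ (A ∩ Cyl s w') := by
        rw [Finset.sum_congr rfl fun w' _ => (inv_measure_inter_cyl hInv s w' w)]
        simp [Finset.sum_const, nsmul_eq_mul]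
    _ = μ (⋃ w' : ∀ i : s, ZMod 2, A ∩ Cyl s w') := by
        rw [measure_iUnion hdisj fun w' => hA.inter (measurableSet_cyl s w'), tsum_fintype]
    _ = μ A := by rw [← hdecomp]

lemma measure_cyl (s : Finset ℕ) (w : ∀ i : s, ZMod 2) :
    μ (Cyl s w) = ((2 : ℝ≥0∞) ^ s.card)⁻¹ := by
  have hinv : Inv (univ : Set G) := fun v _ => by simp
  have h := card_mul_measure_inter_cyl MeasurableSet.univ hinv s w
  rw [univ_inter, measure_univ] at h
  have hcard : (Fintype.card (∀ i : s, ZMod 2) : ℝ≥0∞) = (2 : ℝ≥0∞) ^ s.card := by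
    rw [Fintype.card_pi]
    push_cast
    simp [ZMod.card, Finset.prod_const, Finset.card_attach]
  rw [hcard] at h
  have h0 : (2 : ℝ≥0∞) ^ s.card ≠ 0 := by positivity
  have ht : (2 : ℝ≥0∞) ^ s.card ≠ ∞ := by
    exact ENNReal.pow_ne_top (by norm_num)
  calc μ (Cyl s w) = ((2 : ℝ≥0∞) ^ s.card)⁻¹ * ((2 : ℝ≥0∞) ^ s.card * μ (Cyl s w)) := by
        rw [← mul_assoc, ENNReal.inv_mul_cancel h0 ht, one_mul]
    _ = ((2 : ℝ≥0∞) ^ s.card)⁻¹ := by rw [h, mul_one]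

lemma measure_inter_cyl {A : Set G} (hA : MeasurableSet A) (hInv : Inv A)
    (s : Finset ℕ) (w : ∀ i : s, ZMod 2) :
    μ (A ∩ Cyl s w) = μ A * μ (Cyl s w) := by
  have h1 := card_mul_measure_inter_cyl hA hInv s w
  have hinv : Inv (univ : Set G) := fun v _ => by simp
  have h2 := card_mul_measure_inter_cyl MeasurableSet.univ hinv s w
  rw [univ_inter, measure_univ] at h2
  calc μ (A ∩ Cyl s w)
      = μ (A ∩ Cyl s w) * ((Fintype.card (∀ i : s, ZMod 2) : ℝ≥0∞) * μ (Cyl s w)) := by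
        rw [h2, mul_one]
    _ = ((Fintype.card (∀ i : s, ZMod 2) : ℝ≥0∞) * μ (A ∩ Cyl s w)) * μ (Cyl s w) := by ring
    _ = μ A * μ (Cyl s w) := by rw [h1]

/-- Ergodicity: every invariant measurable set is null or conull. -/
lemma zero_or_one {A : Set G} (hA : MeasurableSet A) (hInv : Inv A) :
    μ A = 0 ∨ μ A = 1 := by
  have hres : μ.restrict A = μ A • μ := by
    have hgen : (inferInstance : MeasurableSpace G) =
        MeasurableSpace.generateFrom (measurableCylinders fun _ : ℕ => ZMod 2) :=
      (generateFrom_measurableCylinders (α := fun _ : ℕ => ZMod 2)).symm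
    refine ext_of_generate_finite _
      hgen (isPiSystem_measurableCylinders (α := fun _ : ℕ => ZMod 2)) ?_ ?_
    · intro t ht
      obtain ⟨s, S, hS, rfl⟩ := (mem_measurableCylinders t).1 ht
      have hSfin : S.Finite := S.toFinite
      have hdecomp : cylinder s S = ⋃ w ∈ hSfin.toFinset, Cyl s w := by
        ext x
        simp [Cyl, cylinder, mem_preimage]
      have hmc : ∀ w ∈ hSfin.toFinset, MeasurableSet (Cyl s w ∩ A) := fun w _ =>
        (measurableSet_cyl s w).inter hA
      have hd : (hSfin.toFinset : Set (∀ i : s, ZMod 2)).Pairwise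
          (Function.onFun Disjoint fun w => Cyl s w ∩ A) := fun a _ b _ hab =>
        Disjoint.mono inter_subset_left inter_subset_left (cyl_disjoint hab)
      have hd' : (hSfin.toFinset : Set (∀ i : s, ZMod 2)).Pairwise
          (Function.onFun Disjoint fun w => Cyl s w) := fun a _ b _ hab => cyl_disjoint hab
      have hcylS : MeasurableSet (cylinder (α := fun _ : ℕ => ZMod 2) s S) := by
        rw [hdecomp]
        exact MeasurableSet.biUnion hSfin.toFinset.countable_toSet
          fun w _ => measurableSet_cyl s w
      rw [Measure.restrict_apply hcylS, Measure.smul_apply, smul_eq_mul, hdecomp,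
        Set.iUnion₂_inter, measure_biUnion_finset hd hmc,
        measure_biUnion_finset hd' fun w _ => measurableSet_cyl s w, Finset.mul_sum]
      refine Finset.sum_congr rfl fun w _ => ?_
      rw [inter_comm, measure_inter_cyl hA hInv]
    · rw [Measure.restrict_apply_univ, Measure.smul_apply, smul_eq_mul, measure_univ, mul_one]
  have hAA : μ A = μ A * μ A := by
    have := congrArg (fun ν : Measure G => ν A) hres
    simpa [Measure.restrict_apply hA] using this
  rcases eq_or_ne (μ A) 0 with h | h
  · exact Or.inl h
  · right
    have htop : μ A ≠ ∞ := measure_ne_top μ A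
    have : μ A * 1 = μ A * μ A := by rw [mul_one]; exact hAA
    exact ((ENNReal.mul_right_inj h htop).1 this).symm

/-- The coordinate map from `ZMod 2` to `Bool`. -/
def c : ZMod 2 → Bool := fun k => k = 1

lemma c_inj : Function.Injective c := by decide

/-- The homeomorphic identification of `G` with Cantor space. -/
def e : G → (ℕ → Bool) := fun x n => c (x n)

lemma e_measurable : Measurable e :=
  measurable_pi_lambda _ fun n => (measurable_from_top.comp (measurable_pi_apply n))

theorem main : ¬ SmoothRel E0 := by
  rintro ⟨Z, borelZ, polishZ, φ, hmeas, hred⟩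
  haveI := borelZ; haveI := polishZ
  letI := TopologicalSpace.upgradeIsCompletelyMetrizable Z
  -- the composed reduction from G
  set ψ : G → Z := φ ∘ e with hψ
  have hψm : Measurable ψ := hmeas.comp e_measurable
  -- invariance of preimages
  have hinv : ∀ T : Set Z, Inv (ψ ⁻¹' T) := by
    intro T v ⟨m, hm⟩
    ext x
    have : ψ (v + x) = ψ x := by
      apply (hred (e (v + x)) (e x)).1
      refine ⟨m, fun n hn => ?_⟩
      simp [e, Pi.add_apply, hm n hn]
    simp [mem_preimage, this]
  -- the pushforward measure
  set ν : Measure Z := μ.map ψ with hν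
  haveI : IsProbabilityMeasure ν := Measure.isProbabilityMeasure_map hψm.aemeasurable
  have hν01 : ∀ T : Set Z, MeasurableSet T → ν T = 0 ∨ ν T = 1 := by
    intro T hT
    rw [hν, Measure.map_apply hψm hT]
    exact zero_or_one (hψm hT) (hinv T)
  -- find the atom using a countable basis
  obtain ⟨B, hBc, hBne, hBbasis⟩ := TopologicalSpace.exists_countable_basis Z
  set N : Set Z := ⋃₀ {U ∈ B | ν U = 0} with hN
  have hνN : ν N = 0 := by
    rw [hN, measure_sUnion_null_iff (hBc.mono (sep_subset _ _))]
    exact fun U hU => hU.2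
  have hNne : Nᶜ.Nonempty := by
    rw [nonempty_compl]
    intro h
    rw [h] at hνN
    simp [measure_univ] at hνN
  obtain ⟨z, hz⟩ := hNne
  -- every basis set containing a point outside N has measure one
  have hbig : ∀ y ∈ Nᶜ, ∀ U ∈ B, y ∈ U → ν U = 1 := by
    intro y hy U hU hyU
    rcases hν01 U (hBbasis.isOpen hU).measurableSet with h | h
    · exact absurd (show y ∈ N from ⟨U, ⟨hU, h⟩, hyU⟩) hy
    · exact h
  -- N^c is a single point
  have huniq : ∀ y ∈ Nᶜ, y = z := by
    intro y hy
    by_contra hne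
    obtain ⟨O₁, O₂, hO₁, hO₂, hyO₁, hzO₂, hdisj⟩ := t2_separation hne
    obtain ⟨U₁, hU₁B, hyU₁, hU₁sub⟩ := hBbasis.exists_subset_of_mem_open hyO₁ hO₁
    obtain ⟨U₂, hU₂B, hzU₂, hU₂sub⟩ := hBbasis.exists_subset_of_mem_open hzO₂ hO₂
    have h1 := hbig y hy U₁ hU₁B hyU₁
    have h2 := hbig z hz U₂ hU₂B hzU₂
    have hd : Disjoint U₁ U₂ := hdisj.mono hU₁sub hU₂sub
    have : ν (U₁ ∪ U₂) = 2 := by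
      rw [measure_union hd (hBbasis.isOpen hU₂B).measurableSet, h1, h2]
      norm_num
    have hle : ν (U₁ ∪ U₂) ≤ 1 := prob_le_one
    rw [this] at hle
    norm_num at hle
  have hzc : {z}ᶜ ⊆ N := by
    intro y hy
    by_contra hyN
    exact hy (huniq y hyN)
  have hνz : ν {z} = 1 := by
    have hν_compl : ν {z}ᶜ = 0 := measure_mono_null hzc hνN
    have hmz : MeasurableSet ({z} : Set Z) := measurableSet_singleton z
    have := measure_add_measure_compl hmz (μ := ν)
    rw [hν_compl, add_zero, measure_univ] at this
    exact this
  -- so the fiber over z has measure 1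
  have hfib : μ (ψ ⁻¹' {z}) = 1 := by
    rw [← Measure.map_apply hψm (measurableSet_singleton z)]
    exact hνz
  -- pick a point in the fiber; the fiber is a single E₀ class
  have hfibne : (ψ ⁻¹' {z}).Nonempty :=
    nonempty_of_measure_ne_zero (by rw [hfib]; norm_num)
  obtain ⟨a, ha⟩ := hfibne
  -- the fiber is contained in a countable union of small sets
  have hsub : ψ ⁻¹' {z} ⊆ ⋃ m : ℕ, {x : G | ∀ n ≥ m, x n = a n} := by
    intro b hb
    have : φ (e a) = φ (e b) := by
      have ha' : ψ a = z := ha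
      have hb' : ψ b = z := hb
      rw [hψ] at ha' hb'
      simp only [Function.comp_apply] at ha' hb'
      rw [ha', hb']
    obtain ⟨m, hm⟩ := (hred (e a) (e b)).2 this
    refine mem_iUnion.2 ⟨m, fun n hn => ?_⟩
    exact (c_inj (hm n hn)).symm
  -- each of those sets is null
  have hDnull : ∀ m : ℕ, μ {x : G | ∀ n ≥ m, x n = a n} = 0 := by
    intro m
    have hle : ∀ k : ℕ, μ {x : G | ∀ n ≥ m, x n = a n} ≤ ((2 : ℝ≥0∞)⁻¹) ^ k := by
      intro k
      set s : Finset ℕ := Finset.Ico m (m + k) with hs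
      set w : ∀ i : s, ZMod 2 := fun i => a i with hw
      have hsub' : {x : G | ∀ n ≥ m, x n = a n} ⊆ Cyl s w := by
        intro x hx
        have : ∀ i : s, x i = a i := by
          rintro ⟨n, hn⟩
          rw [hs] at hn
          exact hx n (Finset.mem_Ico.1 hn).1
        funext i
        exact this i
      have := measure_mono (μ := μ) hsub'
      rw [measure_cyl] at this
      rw [← ENNReal.inv_pow]
      rwa [hs, Nat.card_Ico, Nat.add_sub_cancel_left] at this
    have htend : Filter.Tendsto (fun k : ℕ => ((2 : ℝ≥0∞)⁻¹) ^ k) Filter.atTop (nhds 0) :=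
      ENNReal.tendsto_pow_atTop_nhds_zero_of_lt_one (by
        rw [ENNReal.inv_lt_one]; norm_num)
    have := ge_of_tendsto htend (Filter.Eventually.of_forall hle)
    exact le_antisymm this (zero_le)
  have : μ (ψ ⁻¹' {z}) = 0 := by
    exact measure_mono_null (μ := μ) hsub (measure_iUnion_null (μ := μ) fun m => hDnull m)
  rw [hfib] at this
  norm_num at this

end E0NonSmooth

/-- The equivalence relation `E₀` of eventual equality on `2^ℕ` is not smooth: there is
no Borel measurable map `φ` from `2^ℕ` to a Polish space with `x E₀ y ↔ φ x = φ y`. -/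
theorem stmt_10 : ¬ SmoothRel E0 := E0NonSmooth.main
end

section
/- The homeomorphism relation H on the hyperspace K(Q) of compact subsets of the Hilbert cube, given by (K,L) ∈ H iff K is homeomorphic to L, is an analytic subset of K(Q) × K(Q). -/
open TopologicalSpace

/-- The Hilbert cube `[0,1]^ℕ`. -/
abbrev HilbertCube : Type := ℕ → unitInterval

/-- A compatible metric on the Hilbert cube (inducing the product topology). -/
noncomputable instance : MetricSpace HilbertCube := PiCountable.metricSpace

open Metric EMetric Set

namespace Stmt12

variable {α β : Type*} [MetricSpace α] [MetricSpace β]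

lemma NC.edist_eq (s t : NonemptyCompacts α) :
    edist s t = hausdorffEdist (s : Set α) (t : Set α) := rfl

noncomputable def imgNC (f : α → β) (hf : Continuous f) (s : NonemptyCompacts α) :
    NonemptyCompacts β :=
  ⟨⟨f '' s, s.isCompact.image hf⟩, s.nonempty.image f⟩

lemma coe_imgNC (f : α → β) (hf : Continuous f) (s : NonemptyCompacts α) :
    (imgNC f hf s : Set β) = f '' s := rfl

lemma lipschitz_imgNC {c : NNReal} {f : α → β} (hf : LipschitzWith c f) :
    LipschitzWith c (imgNC f hf.continuous) := by
  have key : ∀ s t : NonemptyCompacts α, ∀ x ∈ f '' (s : Set α),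
      ∃ y ∈ f '' (t : Set α), edist x y ≤ c * hausdorffEdist (s : Set α) (t : Set α) := by
    rintro s t x ⟨a, ha, rfl⟩
    obtain ⟨b, hb, hab⟩ := t.isCompact.exists_infEdist_eq_edist t.nonempty a
    refine ⟨f b, mem_image_of_mem _ hb, ?_⟩
    calc edist (f a) (f b) ≤ c * edist a b := hf a b
      _ ≤ c * hausdorffEdist (s : Set α) (t : Set α) := by
          rw [← hab]
          exact mul_le_mul_right (infEdist_le_hausdorffEdist_of_mem ha) _
  intro s t
  rw [NC.edist_eq, NC.edist_eq, coe_imgNC, coe_imgNC]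
  refine hausdorffEdist_le_of_mem_edist (key s t) ?_
  intro x hx
  obtain ⟨y, hy, hxy⟩ := key t s x hx
  exact ⟨y, hy, hxy.trans_eq (congrArg (fun r => (c : ENNReal) * r) hausdorffEDist_comm)⟩

end Stmt12

namespace Stmt12

local notation "Q" => HilbertCube
local notation "Q2" => (HilbertCube × HilbertCube)

lemma isClosed_memPair {γ : Type*} [MetricSpace γ] :
    IsClosed {x : γ × NonemptyCompacts γ | x.1 ∈ (x.2 : Set γ)} := by
  have h : {x : γ × NonemptyCompacts γ | x.1 ∈ (x.2 : Set γ)} =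
      (fun x : γ × NonemptyCompacts γ => Metric.infDist x.1 (x.2 : Set γ)) ⁻¹' {0} := by
    ext x
    simp only [mem_setOf_eq, mem_preimage, mem_singleton_iff]
    exact x.2.isCompact.isClosed.mem_iff_infDist_zero x.2.nonempty
  rw [h]
  exact isClosed_singleton.preimage lipschitz_infDist.continuous

/-- compacts that fail the graph condition with gap at least 1/(m+1) -/
def bad (m : ℕ) : Set (NonemptyCompacts Q2) :=
  {G | ∃ pq : Q2 × Q2, pq.1 ∈ (G : Set Q2) ∧ pq.2 ∈ (G : Set Q2) ∧
    ((pq.1.1 = pq.2.1 ∧ 1 / (m + 1 : ℝ) ≤ dist pq.1.2 pq.2.2) ∨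
     (pq.1.2 = pq.2.2 ∧ 1 / (m + 1 : ℝ) ≤ dist pq.1.1 pq.2.1))}

lemma isClosed_bad (m : ℕ) : IsClosed (bad m) := by
  have hT : IsClosed {x : NonemptyCompacts Q2 × (Q2 × Q2) |
      x.2.1 ∈ (x.1 : Set Q2) ∧ x.2.2 ∈ (x.1 : Set Q2) ∧
      ((x.2.1.1 = x.2.2.1 ∧ 1 / (m + 1 : ℝ) ≤ dist x.2.1.2 x.2.2.2) ∨
       (x.2.1.2 = x.2.2.2 ∧ 1 / (m + 1 : ℝ) ≤ dist x.2.1.1 x.2.2.1))} := by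
    apply IsClosed.inter
    · exact isClosed_memPair.preimage
        ((continuous_fst.comp continuous_snd).prodMk continuous_fst)
    apply IsClosed.inter
    · exact isClosed_memPair.preimage
        ((continuous_snd.comp continuous_snd).prodMk continuous_fst)
    apply IsClosed.union
    · refine IsClosed.inter (isClosed_eq (by fun_prop) (by fun_prop)) ?_
      exact isClosed_Ici.preimage (show Continuous fun x : NonemptyCompacts Q2 × (Q2 × Q2) =>
        dist x.2.1.2 x.2.2.2 by fun_prop)
    · refine IsClosed.inter (isClosed_eq (by fun_prop) (by fun_prop)) ?_
      exact isClosed_Ici.preimage (show Continuous fun x : NonemptyCompacts Q2 × (Q2 × Q2) =>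
        dist x.2.1.1 x.2.2.1 by fun_prop)
  have himg := isClosedMap_fst_of_compactSpace _ hT
  convert himg using 1
  ext G
  constructor
  · rintro ⟨pq, h1, h2, h3⟩
    exact ⟨(G, pq), ⟨h1, h2, h3⟩, rfl⟩
  · rintro ⟨⟨G', pq⟩, ⟨h1, h2, h3⟩, rfl⟩
    exact ⟨pq, h1, h2, h3⟩

/-- graph condition -/
def goodGraph : Set (NonemptyCompacts Q2) :=
  {G | ∀ p ∈ (G : Set Q2), ∀ q ∈ (G : Set Q2), (p.1 = q.1 ↔ p.2 = q.2)}

lemma compl_goodGraph : goodGraphᶜ = ⋃ m : ℕ, bad m := by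
  ext G
  simp only [mem_compl_iff, goodGraph, mem_setOf_eq, mem_iUnion, bad]
  constructor
  · intro h
    push_neg at h
    obtain ⟨p, hp, q, hq, hiff⟩ := h
    rcases hiff with ⟨h1, h2⟩ | ⟨h1, h2⟩
    · obtain ⟨m, hm⟩ := exists_nat_one_div_lt (dist_pos.2 h2)
      exact ⟨m, (p, q), hp, hq, Or.inl ⟨h1, hm.le⟩⟩
    · obtain ⟨m, hm⟩ := exists_nat_one_div_lt (dist_pos.2 h1)
      exact ⟨m, (p, q), hp, hq, Or.inr ⟨h2, hm.le⟩⟩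
  · rintro ⟨m, pq, hp, hq, hc⟩
    intro h
    have hpos : (0 : ℝ) < 1 / (m + 1 : ℝ) := by positivity
    rcases hc with ⟨h1, h2⟩ | ⟨h1, h2⟩
    · have := (h _ hp _ hq).1 h1
      rw [this] at h2
      simp at h2
      linarith
    · have := (h _ hp _ hq).2 h1
      rw [this] at h2
      simp at h2
      linarith

end Stmt12

namespace Stmt12

local notation "Q" => HilbertCube
local notation "Q2" => (HilbertCube × HilbertCube)

instance : PolishSpace (NonemptyCompacts Q × NonemptyCompacts Q) := inferInstance
instance : PolishSpace (NonemptyCompacts Q2) := inferInstance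

noncomputable def F1 : NonemptyCompacts Q2 → NonemptyCompacts Q :=
  imgNC Prod.fst continuous_fst

noncomputable def F2 : NonemptyCompacts Q2 → NonemptyCompacts Q :=
  imgNC Prod.snd continuous_snd

lemma cont_F1 : Continuous F1 := (lipschitz_imgNC LipschitzWith.prod_fst).continuous

lemma cont_F2 : Continuous F2 := (lipschitz_imgNC LipschitzWith.prod_snd).continuous

def Bset : Set ((NonemptyCompacts Q × NonemptyCompacts Q) × NonemptyCompacts Q2) :=
  {x | F1 x.2 = x.1.1 ∧ F2 x.2 = x.1.2 ∧ x.2 ∈ goodGraph}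

lemma measurable_Bset
    [MeasurableSpace ((NonemptyCompacts Q × NonemptyCompacts Q) × NonemptyCompacts Q2)]
    [BorelSpace ((NonemptyCompacts Q × NonemptyCompacts Q) × NonemptyCompacts Q2)] :
    MeasurableSet Bset := by
  have h1 : IsClosed {x : (NonemptyCompacts Q × NonemptyCompacts Q) × NonemptyCompacts Q2 |
      F1 x.2 = x.1.1} :=
    isClosed_eq (cont_F1.comp continuous_snd) (continuous_fst.comp continuous_fst)
  have h2 : IsClosed {x : (NonemptyCompacts Q × NonemptyCompacts Q) × NonemptyCompacts Q2 |
      F2 x.2 = x.1.2} :=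
    isClosed_eq (cont_F2.comp continuous_snd) (continuous_snd.comp continuous_fst)
  borelize (NonemptyCompacts Q2)
  have h3 : MeasurableSet goodGraph := by
    rw [← compl_compl goodGraph, compl_goodGraph]
    exact (MeasurableSet.iUnion fun m => (isClosed_bad m).measurableSet).compl
  exact h1.measurableSet.inter
    (h2.measurableSet.inter (h3.preimage continuous_snd.measurable))

lemma key_eq :
    {p : NonemptyCompacts Q × NonemptyCompacts Q |
      Nonempty (↥(p.1 : Set Q) ≃ₜ ↥(p.2 : Set Q))} = Prod.fst '' Bset := by
  ext p
  simp only [mem_setOf_eq, mem_image]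
  constructor
  · rintro ⟨e⟩
    haveI : CompactSpace ↥(p.1 : Set Q) := isCompact_iff_compactSpace.mp p.1.isCompact
    haveI : Nonempty ↥(p.1 : Set Q) := p.1.nonempty.to_subtype
    set g : ↥(p.1 : Set Q) → Q2 := fun k => ((k : Q), ((e k : ↥(p.2 : Set Q)) : Q)) with hg
    have hgc : Continuous g :=
      continuous_subtype_val.prodMk (continuous_subtype_val.comp e.continuous)
    refine ⟨(p, ⟨⟨range g, isCompact_range hgc⟩, range_nonempty g⟩), ⟨?_, ?_, ?_⟩, rfl⟩
    · apply NonemptyCompacts.ext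
      show Prod.fst '' (range g) = (p.1 : Set Q)
      rw [← range_comp]
      exact Subtype.range_coe
    · apply NonemptyCompacts.ext
      show Prod.snd '' (range g) = (p.2 : Set Q)
      rw [← range_comp]
      have hcomp : (Prod.snd ∘ g) = (Subtype.val ∘ (e : ↥(p.1 : Set Q) → ↥(p.2 : Set Q))) := rfl
      rw [hcomp, range_comp, e.surjective.range_eq, image_univ, Subtype.range_coe]
    · rintro q ⟨k, rfl⟩ q' ⟨k', rfl⟩
      exact Subtype.coe_inj.trans ((e.injective.eq_iff).symm.trans Subtype.coe_inj.symm)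
  · rintro ⟨⟨pr, G⟩, ⟨h1, h2, h3⟩, rfl⟩
    haveI : CompactSpace ↥(G : Set Q2) := isCompact_iff_compactSpace.mp G.isCompact
    have hc1 : (Prod.fst '' (G : Set Q2)) = (pr.1 : Set Q) :=
      congrArg (fun s : NonemptyCompacts Q => (s : Set Q)) h1
    have hc2 : (Prod.snd '' (G : Set Q2)) = (pr.2 : Set Q) :=
      congrArg (fun s : NonemptyCompacts Q => (s : Set Q)) h2
    let f1 : ↥(G : Set Q2) → ↥(pr.1 : Set Q) :=
      fun gp => ⟨(gp : Q2).1, hc1 ▸ mem_image_of_mem Prod.fst gp.2⟩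
    let f2 : ↥(G : Set Q2) → ↥(pr.2 : Set Q) :=
      fun gp => ⟨(gp : Q2).2, hc2 ▸ mem_image_of_mem Prod.snd gp.2⟩
    have hbij1 : Function.Bijective f1 := by
      constructor
      · intro a b hab
        apply Subtype.ext
        have h11 : (a : Q2).1 = (b : Q2).1 := congrArg Subtype.val hab
        exact Prod.ext h11 ((h3 _ a.2 _ b.2).1 h11)
      · rintro ⟨k, hk⟩
        rw [← hc1] at hk
        obtain ⟨gp, hgp, hfst⟩ := hk
        exact ⟨⟨gp, hgp⟩, Subtype.ext hfst⟩
    have hbij2 : Function.Bijective f2 := by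
      constructor
      · intro a b hab
        apply Subtype.ext
        have h22 : (a : Q2).2 = (b : Q2).2 := congrArg Subtype.val hab
        exact Prod.ext ((h3 _ a.2 _ b.2).2 h22) h22
      · rintro ⟨k, hk⟩
        rw [← hc2] at hk
        obtain ⟨gp, hgp, hsnd⟩ := hk
        exact ⟨⟨gp, hgp⟩, Subtype.ext hsnd⟩
    have hcont1 : Continuous f1 :=
      Continuous.subtype_mk (continuous_fst.comp continuous_subtype_val) _
    have hcont2 : Continuous f2 :=
      Continuous.subtype_mk (continuous_snd.comp continuous_subtype_val) _
    let e1 := Continuous.homeoOfEquivCompactToT2 (f := Equiv.ofBijective f1 hbij1) hcont1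
    let e2 := Continuous.homeoOfEquivCompactToT2 (f := Equiv.ofBijective f2 hbij2) hcont2
    exact ⟨e1.symm.trans e2⟩

end Stmt12

/-- The homeomorphism relation `H` on the hyperspace `K(Q)` of nonempty compact subsets
of the Hilbert cube, `(K, L) ∈ H` iff `K` is homeomorphic to `L`, is an analytic subset
of `K(Q) × K(Q)`. -/
theorem stmt_12 :
    MeasureTheory.AnalyticSet
      {p : NonemptyCompacts HilbertCube × NonemptyCompacts HilbertCube |
        Nonempty (↥(p.1 : Set HilbertCube) ≃ₜ ↥(p.2 : Set HilbertCube))} := by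
  rw [Stmt12.key_eq]
  borelize ((NonemptyCompacts HilbertCube × NonemptyCompacts HilbertCube) ×
    NonemptyCompacts (HilbertCube × HilbertCube))
  have hB : MeasurableSet Stmt12.Bset := Stmt12.measurable_Bset
  exact hB.analyticSet.image_of_continuous continuous_fst
end

section
/- Let K be a nondegenerate continuum in the Hilbert cube and let e, f : (0,1] → K be continuous compactifying maps. Then the compactification S_e = graph(e) ∪ ({0} × K) is homeomorphic to S_f if and only if there exist homeomorphisms α of K and β of (0,1] such that the distance d(α(e(t)), f(β(t))) tends to 0 as t → 0⁺. -/
open TopologicalSpace Set Filter Topology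

/-- A map `g : (0,1] → K` is compactifying if `⋂_{ε>0} closure (g((0,ε))) = K`. -/
def Compactifying (K : Set HilbertCube) (g : Set.Ioc (0:ℝ) 1 → K) : Prop :=
  (⋂ ε ∈ Set.Ioi (0:ℝ),
    closure ((fun t : Set.Ioc (0:ℝ) 1 => (g t : HilbertCube)) '' {t | (t : ℝ) < ε})) = K

/-- The compactification `S_g = graph(g) ∪ ({0} × K)` of `(0,1]` associated to a
compactifying map `g : (0,1] → K`, as a subset of `ℝ × Q`. -/
def SpiralSet (K : Set HilbertCube) (g : Set.Ioc (0:ℝ) 1 → K) : Set (ℝ × HilbertCube) :=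
  (Set.range fun t : Set.Ioc (0:ℝ) 1 => ((t : ℝ), (g t : HilbertCube))) ∪ {0} ×ˢ K

namespace SpiralAux

abbrev I01 : Set ℝ := Set.Ioc (0:ℝ) 1

variable {K : Set HilbertCube} {g : I01 → K}

lemma mem_graph (t : I01) : (((t:ℝ), (g t : HilbertCube)) : ℝ × HilbertCube) ∈ SpiralSet K g :=
  Or.inl ⟨t, rfl⟩

lemma mem_rem {k : HilbertCube} (hk : k ∈ K) : ((0:ℝ), k) ∈ SpiralSet K g :=
  Or.inr ⟨rfl, hk⟩

lemma fst_nonneg {x : ℝ × HilbertCube} (hx : x ∈ SpiralSet K g) : 0 ≤ x.1 := by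
  rcases hx with ⟨t, rfl⟩ | ⟨h0, _⟩
  · exact le_of_lt t.2.1
  · exact le_of_eq h0.symm

lemma fst_le_one {x : ℝ × HilbertCube} (hx : x ∈ SpiralSet K g) : x.1 ≤ 1 := by
  rcases hx with ⟨t, rfl⟩ | ⟨h0, _⟩
  · exact t.2.2
  · rw [show x.1 = 0 from h0]; norm_num

lemma snd_mem {x : ℝ × HilbertCube} (hx : x ∈ SpiralSet K g) : x.2 ∈ K := by
  rcases hx with ⟨t, rfl⟩ | ⟨_, h⟩
  · exact (g t).2
  · exact h

lemma snd_eq {x : ℝ × HilbertCube} (hx : x ∈ SpiralSet K g) (h1 : 0 < x.1) (h2 : x.1 ≤ 1) :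
    x.2 = (g ⟨x.1, h1, h2⟩ : HilbertCube) := by
  rcases hx with ⟨t, rfl⟩ | ⟨h0, _⟩
  · obtain ⟨v, hv⟩ := t
    rfl
  · exact absurd (show x.1 = 0 from h0) h1.ne'

lemma eq_graph {x : ℝ × HilbertCube} (hx : x ∈ SpiralSet K g) (h1 : 0 < x.1) :
    x = ((x.1 : ℝ), (g ⟨x.1, h1, fst_le_one hx⟩ : HilbertCube)) :=
  Prod.ext rfl (snd_eq hx h1 (fst_le_one hx))

lemma fst_eq_zero {x : ℝ × HilbertCube} (hx : x ∈ SpiralSet K g) (h : ¬ 0 < x.1) : x.1 = 0 :=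
  le_antisymm (not_lt.mp h) (fst_nonneg hx)

/-- From the compactifying property: approximation of any point of `K` by graph points
with arbitrarily small parameter. -/
lemma approx (hcg : Compactifying K g) {k : HilbertCube} (hk : k ∈ K) {ρ : ℝ} (hρ : 0 < ρ) :
    ∃ t : I01, (t : ℝ) < ρ ∧ dist (g t : HilbertCube) k < ρ := by
  have hmem : k ∈ ⋂ ε ∈ Set.Ioi (0:ℝ),
      closure ((fun t : I01 => (g t : HilbertCube)) '' {t | (t : ℝ) < ε}) := by
    rw [hcg]; exact hk
  have h2 := (Set.mem_iInter₂.mp hmem) ρ hρ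
  rcases Metric.mem_closure_iff.mp h2 ρ hρ with ⟨y, ⟨t, ht, rfl⟩, hd⟩
  exact ⟨t, ht, by rwa [dist_comm]⟩

/-- The spiral set is compact. -/
lemma spiral_compact (hKcomp : IsCompact K) (hg : Continuous g) :
    IsCompact (SpiralSet K g) := by
  have hclosed : IsClosed (SpiralSet K g) := by
    refine IsSeqClosed.isClosed (fun x p hx hlim => ?_)
    have h1 : Tendsto (fun n => (x n).1) atTop (𝓝 p.1) := (continuous_fst.tendsto p).comp hlim
    have h2 : Tendsto (fun n => (x n).2) atTop (𝓝 p.2) := (continuous_snd.tendsto p).comp hlim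
    by_cases hp : 0 < p.1
    · -- eventually graph points
      have hev : ∀ᶠ n in atTop, 0 < (x n).1 := h1.eventually (eventually_gt_nhds hp)
      rcases hev.exists_forall_of_atTop with ⟨N, hN⟩
      have hple : p.1 ≤ 1 := le_of_tendsto h1 (Eventually.of_forall fun n => fst_le_one (hx n))
      set τ : ℕ → I01 := fun n => ⟨(x (n + N)).1, hN _ (Nat.le_add_left _ _), fst_le_one (hx _)⟩
      have hτ : Tendsto τ atTop (𝓝 ⟨p.1, hp, hple⟩) :=
        tendsto_subtype_rng.mpr (h1.comp (tendsto_add_atTop_nat N))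
      have hg1 : Tendsto (fun n => (g (τ n) : HilbertCube)) atTop
          (𝓝 (g ⟨p.1, hp, hple⟩ : HilbertCube)) :=
        (continuous_subtype_val.tendsto _).comp ((hg.tendsto _).comp hτ)
      have hg2 : Tendsto (fun n => (g (τ n) : HilbertCube)) atTop (𝓝 p.2) := by
        have : ∀ n, (g (τ n) : HilbertCube) = (x (n + N)).2 := fun n =>
          (snd_eq (hx (n + N)) (hN _ (Nat.le_add_left _ _)) (fst_le_one (hx _))).symm
        rw [funext this]
        exact h2.comp (tendsto_add_atTop_nat N)
      have hps := tendsto_nhds_unique hg2 hg1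
      have : p = ((p.1 : ℝ), (g ⟨p.1, hp, hple⟩ : HilbertCube)) := Prod.ext rfl hps
      rw [this]
      exact mem_graph ⟨p.1, hp, hple⟩
    · have h0 : p.1 = 0 :=
        le_antisymm (not_lt.mp hp) (ge_of_tendsto' h1 (fun n => fst_nonneg (hx n)))
      have hK2 : p.2 ∈ K :=
        hKcomp.isClosed.mem_of_tendsto h2 (Eventually.of_forall fun n => snd_mem (hx n))
      exact Or.inr ⟨h0, hK2⟩
  refine IsCompact.of_isClosed_subset ((isCompact_Icc (a := (0:ℝ)) (b := 1)).prod hKcomp)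
    hclosed ?_
  intro x hx
  exact ⟨⟨fst_nonneg hx, fst_le_one hx⟩, snd_mem hx⟩


/-- A connected subset of the spiral containing a remainder point and a graph point
contains all graph points with smaller parameter. -/
lemma conn_sub {C : Set (ℝ × HilbertCube)} (hCS : C ⊆ SpiralSet K g)
    (hC : IsPreconnected C) {k : HilbertCube} (hkC : ((0:ℝ), k) ∈ C)
    {t : I01} (htC : (((t:ℝ), (g t : HilbertCube)) : ℝ × HilbertCube) ∈ C)
    (s : I01) (hst : (s:ℝ) < t) : (((s:ℝ), (g s : HilbertCube)) : ℝ × HilbertCube) ∈ C := by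
  by_contra hs
  have hopenA : IsOpen {x : ℝ × HilbertCube | x.1 < (s:ℝ)} :=
    isOpen_lt continuous_fst continuous_const
  have hopenB : IsOpen {x : ℝ × HilbertCube | (s:ℝ) < x.1} :=
    isOpen_lt continuous_const continuous_fst
  have hsub : C ⊆ {x : ℝ × HilbertCube | x.1 < (s:ℝ)} ∪ {x : ℝ × HilbertCube | (s:ℝ) < x.1} := by
    intro x hxC
    rcases lt_trichotomy x.1 (s:ℝ) with h | h | h
    · exact Or.inl h
    · exfalso
      apply hs
      have hx := hCS hxC
      have h1 : 0 < x.1 := by rw [h]; exact s.2.1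
      have heq := eq_graph hx h1
      have hxs : (⟨x.1, h1, fst_le_one hx⟩ : I01) = s := Subtype.ext h
      rw [hxs] at heq
      have h2 : (((s:ℝ), (g s : HilbertCube)) : ℝ × HilbertCube) = x := by
        rw [heq]; exact Prod.ext h.symm rfl
      rw [h2]; exact hxC
    · exact Or.inr h
  have hA : (C ∩ {x : ℝ × HilbertCube | x.1 < (s:ℝ)}).Nonempty := ⟨((0:ℝ), k), hkC, s.2.1⟩
  have hB : (C ∩ {x : ℝ × HilbertCube | (s:ℝ) < x.1}).Nonempty := ⟨((t:ℝ), (g t : HilbertCube)), htC, hst⟩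
  obtain ⟨z, _, hz1, hz2⟩ := hC _ _ hopenA hopenB hsub hA hB
  simp only [Set.mem_setOf_eq] at hz1 hz2
  linarith

/-- Local connectedness at a point, a topological invariant. -/
def LocConnAt {X : Type*} [TopologicalSpace X] (p : X) : Prop :=
  ∀ U ∈ 𝓝 p, ∃ V ∈ 𝓝 p, V ⊆ U ∧ IsPreconnected V

lemma LocConnAt.image {X Y : Type*} [TopologicalSpace X] [TopologicalSpace Y] (h : X ≃ₜ Y)
    {p : X} (hp : LocConnAt p) : LocConnAt (h p) := by
  intro U hU
  obtain ⟨V, hV, hVU, hVc⟩ := hp (h ⁻¹' U) (h.continuous.continuousAt.preimage_mem_nhds hU)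
  refine ⟨h '' V, ?_, ?_, hVc.image h h.continuous.continuousOn⟩
  · rw [← Homeomorph.map_nhds_eq h p]; exact image_mem_map hV
  · rintro y ⟨v, hv, rfl⟩; exact hVU hv

/-- At graph points, the spiral is locally connected. -/
lemma locConnAt_of_pos (hg : Continuous g) {x : ↥(SpiralSet K g)}
    (hpos : 0 < (x : ℝ × HilbertCube).1) : LocConnAt x := by
  intro U hU
  set t : ℝ := (x : ℝ × HilbertCube).1 with hts
  have hle : t ≤ 1 := fst_le_one x.2
  have h2 : (0:ℝ) < t/2 := by positivity
  set c : ℝ → I01 := fun r => ⟨max (t/2) (min r 1),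
    lt_of_lt_of_le h2 (le_max_left _ _),
    max_le (by linarith) (min_le_right _ _)⟩ with hcdef
  have hcc : Continuous c :=
    Continuous.subtype_mk (continuous_const.max (continuous_id.min continuous_const)) _
  set G : ℝ → ↥(SpiralSet K g) :=
    fun r => ⟨((c r : ℝ), (g (c r) : HilbertCube)), mem_graph (c r)⟩ with hGdef
  have hGc : Continuous G := by
    refine Continuous.subtype_mk ?_ _
    exact (continuous_subtype_val.comp hcc).prodMk (continuous_subtype_val.comp (hg.comp hcc))
  have hct : c t = ⟨t, hpos, hle⟩ :=
    Subtype.ext (by simp [hcdef, min_eq_left hle, max_eq_right (by linarith : t/2 ≤ t)])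
  have hGt : G t = x := by
    apply Subtype.ext
    show ((c t : ℝ), (g (c t) : HilbertCube)) = (x : ℝ × HilbertCube)
    rw [hct]
    exact (eq_graph x.2 hpos).symm
  have hU' : U ∈ 𝓝 (G t) := hGt ▸ hU
  obtain ⟨δ, hδpos, hδ⟩ := Metric.mem_nhds_iff.mp (hGc.continuousAt.preimage_mem_nhds hU')
  set δ' := min δ (t/2) with hδ'def
  have hδ'pos : 0 < δ' := lt_min hδpos h2
  have key : ∀ y : ↥(SpiralSet K g), t - δ' < (y : ℝ × HilbertCube).1 →
      (y : ℝ × HilbertCube).1 < t + δ' → G ((y : ℝ × HilbertCube).1) = y := by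
    intro y hy1 hy2
    have hypos : 0 < (y : ℝ × HilbertCube).1 := by
      have : t - δ' ≥ t/2 := by
        have := min_le_right δ (t/2); simp only [hδ'def] at *; linarith
      linarith
    have hyle : (y : ℝ × HilbertCube).1 ≤ 1 := fst_le_one y.2
    have hcy : c ((y : ℝ × HilbertCube).1) = ⟨(y : ℝ × HilbertCube).1, hypos, hyle⟩ := by
      apply Subtype.ext
      have h3 : t - δ' ≥ t/2 := by
        have := min_le_right δ (t/2); simp only [hδ'def] at *; linarith
      simp only [hcdef]
      rw [min_eq_left hyle, max_eq_right (by linarith : t/2 ≤ (y : ℝ × HilbertCube).1)]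
    apply Subtype.ext
    show ((c _ : ℝ), (g (c _) : HilbertCube)) = (y : ℝ × HilbertCube)
    rw [hcy]
    exact (eq_graph y.2 hypos).symm
  refine ⟨Subtype.val ⁻¹' {z : ℝ × HilbertCube | t - δ' < z.1 ∧ z.1 < t + δ'}, ?_, ?_, ?_⟩
  · refine IsOpen.mem_nhds ?_ ?_
    · exact (IsOpen.preimage continuous_subtype_val
        ((isOpen_lt continuous_const continuous_fst).inter
          (isOpen_lt continuous_fst continuous_const)))
    · exact ⟨by linarith, by linarith⟩
  · rintro y ⟨hy1, hy2⟩
    have hyG := key y hy1 hy2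
    have hmem : (y : ℝ × HilbertCube).1 ∈ Metric.ball t δ := by
      rw [Metric.mem_ball, Real.dist_eq, abs_lt]
      have : δ' ≤ δ := min_le_left _ _
      constructor <;> linarith
    have := hδ hmem
    rwa [Set.mem_preimage, hyG] at this
  · have himg : Subtype.val ⁻¹' {z : ℝ × HilbertCube | t - δ' < z.1 ∧ z.1 < t + δ'} =
        G '' (Ioo (t - δ') (t + δ')) := by
      ext y
      constructor
      · rintro ⟨hy1, hy2⟩
        exact ⟨(y : ℝ × HilbertCube).1, ⟨hy1, hy2⟩, key y hy1 hy2⟩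
      · rintro ⟨r, ⟨hr1, hr2⟩, rfl⟩
        show t - δ' < max (t/2) (min r 1) ∧ max (t/2) (min r 1) < t + δ'
        have h3 : t - δ' ≥ t/2 := by
          have := min_le_right δ (t/2); simp only [hδ'def] at *; linarith
        rcases le_or_gt r 1 with hr | hr
        · rw [min_eq_left hr, max_eq_right (by linarith : t/2 ≤ r)]
          exact ⟨hr1, hr2⟩
        · rw [min_eq_right hr.le, max_eq_right (by linarith : t/2 ≤ (1:ℝ))]
          constructor <;> linarith
    rw [himg]
    exact isPreconnected_Ioo.image _ hGc.continuousOn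

/-- At remainder points, the spiral is not locally connected. -/
lemma not_locConnAt (hKnd : K.Nontrivial) (hcg : Compactifying K g)
    {x : ↥(SpiralSet K g)} (hx0 : ¬ 0 < (x : ℝ × HilbertCube).1) : ¬ LocConnAt x := by
  intro hLC
  have hx1 : (x : ℝ × HilbertCube).1 = 0 := fst_eq_zero x.2 hx0
  set k := (x : ℝ × HilbertCube).2 with hkdef
  have hkK : k ∈ K := snd_mem x.2
  obtain ⟨a, ha, b, hb, hab⟩ := hKnd
  obtain ⟨k', hk'K, hkk'⟩ : ∃ k' ∈ K, k' ≠ k := by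
    by_cases h : a = k
    · exact ⟨b, hb, fun hbk => hab (h.trans hbk.symm)⟩
    · exact ⟨a, ha, h⟩
  set δ := dist k' k / 2 with hδdef
  have hδpos : 0 < δ := div_pos (dist_pos.mpr hkk') two_pos
  have hxval : (x : ℝ × HilbertCube) = ((0:ℝ), k) := Prod.ext hx1 rfl
  obtain ⟨V, hV0, hVU, hVc⟩ := hLC (Subtype.val ⁻¹' Metric.ball ((0:ℝ), k) δ)
    (continuous_subtype_val.continuousAt.preimage_mem_nhds
      (by rw [hxval]; exact Metric.ball_mem_nhds _ hδpos))
  have hV := hV0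
  rw [nhds_subtype_eq_comap] at hV
  obtain ⟨s, hs, hsV⟩ := mem_comap.mp hV
  obtain ⟨ρ, hρpos, hρs⟩ := Metric.mem_nhds_iff.mp hs
  obtain ⟨t, htρ, htd⟩ := approx hcg hkK hρpos
  have hq : (⟨((t:ℝ), (g t : HilbertCube)), mem_graph t⟩ : ↥(SpiralSet K g)) ∈ V := by
    apply hsV
    apply hρs
    show (((t:ℝ), (g t : HilbertCube)) : ℝ × HilbertCube) ∈ Metric.ball (x : ℝ × HilbertCube) ρ
    rw [Metric.mem_ball, hxval, Prod.dist_eq]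
    apply max_lt
    · rw [Real.dist_eq, sub_zero, abs_of_pos t.2.1]; exact htρ
    · exact htd
  set C := Subtype.val '' V with hCdef
  have hCc : IsPreconnected C := hVc.image _ continuous_subtype_val.continuousOn
  have hCS : C ⊆ SpiralSet K g := by rintro _ ⟨y, _, rfl⟩; exact y.2
  have hkC : ((0:ℝ), k) ∈ C := ⟨x, mem_of_mem_nhds hV0, hxval⟩
  have htC : (((t:ℝ), (g t : HilbertCube)) : ℝ × HilbertCube) ∈ C :=
    ⟨_, hq, rfl⟩
  obtain ⟨s', hs'lt, hs'd⟩ := approx hcg hk'K (lt_min t.2.1 (half_pos hδpos))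
  have hs'C := conn_sub hCS hCc hkC htC s' (lt_of_lt_of_le hs'lt (min_le_left _ _))
  obtain ⟨y, hyV, hyval⟩ := hs'C
  have hball := hVU hyV
  rw [Set.mem_preimage, hyval, Metric.mem_ball, Prod.dist_eq] at hball
  have h1 : dist ((g s' : HilbertCube)) k < δ :=
    lt_of_le_of_lt (le_max_right _ _) hball
  have h2 : dist ((g s' : HilbertCube)) k' < δ / 2 :=
    lt_of_lt_of_le hs'd (min_le_right _ _)
  have h3 : dist k' k ≤ dist k' ((g s' : HilbertCube)) + dist ((g s' : HilbertCube)) k :=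
    dist_triangle _ _ _
  rw [dist_comm k' ((g s' : HilbertCube))] at h3
  have : dist k' k = 2 * δ := by rw [hδdef]; ring
  linarith


/-- The canonical remainder point. -/
def remPt (g : I01 → K) (k : ↥K) : ↥(SpiralSet K g) :=
  ⟨((0:ℝ), (k : HilbertCube)), mem_rem k.2⟩

/-- The canonical graph point. -/
def gphPt (g : I01 → K) (t : I01) : ↥(SpiralSet K g) :=
  ⟨((t:ℝ), (g t : HilbertCube)), mem_graph t⟩

lemma remPt_continuous (g : I01 → K) : Continuous (remPt g) :=
  Continuous.subtype_mk (continuous_const.prodMk continuous_subtype_val) _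

lemma gphPt_continuous {g : I01 → K} (hg : Continuous g) : Continuous (gphPt g) :=
  Continuous.subtype_mk
    (continuous_subtype_val.prodMk (continuous_subtype_val.comp hg)) _

section Forward

variable {e f : I01 → K}

theorem forward (hKcomp : IsCompact K) (hKnd : K.Nontrivial)
    (he : Continuous e) (hf : Continuous f)
    (hce : Compactifying K e) (hcf : Compactifying K f)
    (h : ↥(SpiralSet K e) ≃ₜ ↥(SpiralSet K f)) :
    ∃ (α : ↥K ≃ₜ ↥K) (β : ↥I01 ≃ₜ ↥I01),
      Tendsto (fun t : I01 =>
          dist ((α (e t) : HilbertCube)) ((f (β t) : HilbertCube)))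
        (Filter.comap (Subtype.val : I01 → ℝ) (nhdsWithin 0 (Set.Ioi 0)))
        (nhds 0) := by
  have charE : ∀ x : ↥(SpiralSet K e), LocConnAt x ↔ 0 < (x : ℝ × HilbertCube).1 :=
    fun x => ⟨fun hl => by_contra fun hn => not_locConnAt hKnd hce hn hl, locConnAt_of_pos he⟩
  have charF : ∀ x : ↥(SpiralSet K f), LocConnAt x ↔ 0 < (x : ℝ × HilbertCube).1 :=
    fun x => ⟨fun hl => by_contra fun hn => not_locConnAt hKnd hcf hn hl, locConnAt_of_pos hf⟩
  have hpos_iff : ∀ x : ↥(SpiralSet K e),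
      (0 < ((h x : ↥(SpiralSet K f)) : ℝ × HilbertCube).1 ↔ 0 < (x : ℝ × HilbertCube).1) := by
    intro x
    rw [← charE, ← charF]
    constructor
    · intro hl
      have := hl.image h.symm
      rwa [h.symm_apply_apply] at this
    · exact fun hl => hl.image h
  have hpos_iff' : ∀ y : ↥(SpiralSet K f),
      (0 < ((h.symm y : ↥(SpiralSet K e)) : ℝ × HilbertCube).1 ↔ 0 < (y : ℝ × HilbertCube).1) := by
    intro y
    have := hpos_iff (h.symm y)
    rw [h.apply_symm_apply] at this
    exact this.symm
  -- the homeomorphism of remainders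
  set αf : ↥K → ↥K := fun k =>
    ⟨((h (remPt e k)) : ℝ × HilbertCube).2, snd_mem (h (remPt e k)).2⟩ with hαfdef
  set αg : ↥K → ↥K := fun k =>
    ⟨((h.symm (remPt f k)) : ℝ × HilbertCube).2, snd_mem (h.symm (remPt f k)).2⟩ with hαgdef
  have keyRemE : ∀ k : ↥K, h (remPt e k) = remPt f (αf k) := by
    intro k
    apply Subtype.ext
    refine Prod.ext ?_ rfl
    refine fst_eq_zero (h (remPt e k)).2 ?_
    rw [hpos_iff]
    show ¬ (0:ℝ) < 0
    exact lt_irrefl 0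
  have keyRemF : ∀ k : ↥K, h.symm (remPt f k) = remPt e (αg k) := by
    intro k
    apply Subtype.ext
    refine Prod.ext ?_ rfl
    refine fst_eq_zero (h.symm (remPt f k)).2 ?_
    rw [hpos_iff']
    show ¬ (0:ℝ) < 0
    exact lt_irrefl 0
  have hαleft : Function.LeftInverse αg αf := by
    intro k
    have : remPt f (αf k) = h (remPt e k) := (keyRemE k).symm
    apply Subtype.ext
    show ((h.symm (remPt f (αf k))) : ℝ × HilbertCube).2 = (k : HilbertCube)
    rw [this, h.symm_apply_apply]
    rfl
  have hαright : Function.RightInverse αg αf := by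
    intro k
    have : remPt e (αg k) = h.symm (remPt f k) := (keyRemF k).symm
    apply Subtype.ext
    show ((h (remPt e (αg k))) : ℝ × HilbertCube).2 = (k : HilbertCube)
    rw [this, h.apply_symm_apply]
    rfl
  have hαfc : Continuous αf :=
    Continuous.subtype_mk
      (continuous_snd.comp (continuous_subtype_val.comp (h.continuous.comp (remPt_continuous e)))) _
  have hαgc : Continuous αg :=
    Continuous.subtype_mk
      (continuous_snd.comp (continuous_subtype_val.comp
        (h.symm.continuous.comp (remPt_continuous f)))) _
  set α : ↥K ≃ₜ ↥K := ⟨⟨αf, αg, hαleft, hαright⟩, hαfc, hαgc⟩ with hαdef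
  -- the homeomorphism of the rays
  set βf : ↥I01 → ↥I01 := fun t =>
    ⟨((h (gphPt e t)) : ℝ × HilbertCube).1,
      (hpos_iff (gphPt e t)).mpr t.2.1, fst_le_one (h (gphPt e t)).2⟩ with hβfdef
  set βg : ↥I01 → ↥I01 := fun t =>
    ⟨((h.symm (gphPt f t)) : ℝ × HilbertCube).1,
      (hpos_iff' (gphPt f t)).mpr t.2.1, fst_le_one (h.symm (gphPt f t)).2⟩ with hβgdef
  have keyGphE : ∀ t : ↥I01, h (gphPt e t) = gphPt f (βf t) := by
    intro t
    exact Subtype.ext (eq_graph (h (gphPt e t)).2 ((hpos_iff (gphPt e t)).mpr t.2.1))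
  have keyGphF : ∀ t : ↥I01, h.symm (gphPt f t) = gphPt e (βg t) := by
    intro t
    exact Subtype.ext (eq_graph (h.symm (gphPt f t)).2 ((hpos_iff' (gphPt f t)).mpr t.2.1))
  have hβleft : Function.LeftInverse βg βf := by
    intro t
    have : gphPt f (βf t) = h (gphPt e t) := (keyGphE t).symm
    apply Subtype.ext
    show ((h.symm (gphPt f (βf t))) : ℝ × HilbertCube).1 = (t : ℝ)
    rw [this, h.symm_apply_apply]
    rfl
  have hβright : Function.RightInverse βg βf := by
    intro t
    have : gphPt e (βg t) = h.symm (gphPt f t) := (keyGphF t).symm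
    apply Subtype.ext
    show ((h (gphPt e (βg t))) : ℝ × HilbertCube).1 = (t : ℝ)
    rw [this, h.apply_symm_apply]
    rfl
  have hβfc : Continuous βf :=
    Continuous.subtype_mk
      (continuous_fst.comp (continuous_subtype_val.comp
        (h.continuous.comp (gphPt_continuous he)))) _
  have hβgc : Continuous βg :=
    Continuous.subtype_mk
      (continuous_fst.comp (continuous_subtype_val.comp
        (h.symm.continuous.comp (gphPt_continuous hf)))) _
  set β : ↥I01 ≃ₜ ↥I01 := ⟨⟨βf, βg, hβleft, hβright⟩, hβfc, hβgc⟩ with hβdef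
  refine ⟨α, β, ?_⟩
  have main : ∀ ε > (0:ℝ), ∃ δ > (0:ℝ), ∀ t : ↥I01, (t : ℝ) < δ →
      dist ((α (e t) : HilbertCube)) ((f (β t) : HilbertCube)) < ε := by
    intro ε hε
    by_contra hcon
    push_neg at hcon
    choose T hT1 hT2 using fun n : ℕ => hcon (1/((n:ℝ)+1)) (by positivity)
    have hTlim : Tendsto (fun n => ((T n : ℝ))) atTop (𝓝 0) := by
      refine squeeze_zero (fun n => (T n).2.1.le) (fun n => (hT1 n).le) ?_
      exact tendsto_one_div_add_atTop_nhds_zero_nat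
    obtain ⟨k, hkK, φ, hφ, hφlim⟩ :=
      hKcomp.tendsto_subseq (x := fun n => ((e (T n) : HilbertCube))) (fun n => (e (T n)).2)
    have hxlim : Tendsto (fun n => gphPt e (T (φ n))) atTop (𝓝 (remPt e ⟨k, hkK⟩)) := by
      rw [tendsto_subtype_rng]
      show Tendsto (fun n => (((T (φ n)) : ℝ), (e (T (φ n)) : HilbertCube))) atTop
        (𝓝 ((0:ℝ), k))
      exact (hTlim.comp hφ.tendsto_atTop).prodMk_nhds hφlim
    have hhlim : Tendsto (fun n => h (gphPt e (T (φ n)))) atTop (𝓝 (h (remPt e ⟨k, hkK⟩))) :=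
      (h.continuous.tendsto _).comp hxlim
    rw [keyRemE ⟨k, hkK⟩] at hhlim
    have hflim : Tendsto (fun n => (f (β (T (φ n))) : HilbertCube)) atTop
        (𝓝 ((αf ⟨k, hkK⟩ : HilbertCube))) := by
      have h2 : Tendsto (fun n => ((h (gphPt e (T (φ n)))) : ℝ × HilbertCube).2) atTop
          (𝓝 ((remPt f (αf ⟨k, hkK⟩) : ℝ × HilbertCube).2)) :=
        ((continuous_snd.comp continuous_subtype_val).tendsto _).comp hhlim
      have h3 : ∀ n, ((h (gphPt e (T (φ n)))) : ℝ × HilbertCube).2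
          = (f (β (T (φ n))) : HilbertCube) := by
        intro n
        rw [keyGphE (T (φ n))]
        rfl
      rw [funext h3] at h2
      exact h2
    have hαlim : Tendsto (fun n => (α (e (T (φ n))) : HilbertCube)) atTop
        (𝓝 ((αf ⟨k, hkK⟩ : HilbertCube))) := by
      have h1 : Tendsto (fun n => e (T (φ n))) atTop (𝓝 ⟨k, hkK⟩) :=
        tendsto_subtype_rng.mpr hφlim
      exact (continuous_subtype_val.tendsto _).comp ((hαfc.tendsto _).comp h1)
    have hdlim : Tendsto (fun n =>
        dist ((α (e (T (φ n))) : HilbertCube)) ((f (β (T (φ n))) : HilbertCube))) atTop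
        (𝓝 0) := by
      have := hαlim.dist hflim
      simpa using this
    have hfin : ε ≤ 0 := ge_of_tendsto' hdlim (fun n => hT2 (φ n))
    linarith
  rw [Metric.tendsto_nhds]
  intro ε hε
  obtain ⟨δ, hδ, hmain⟩ := main ε hε
  have hIoo : Set.Ioo (0:ℝ) δ ∈ nhdsWithin (0:ℝ) (Set.Ioi 0) :=
    Ioo_mem_nhdsGT_of_mem ⟨le_refl 0, hδ⟩
  filter_upwards [preimage_mem_comap hIoo] with t ht
  rw [Real.dist_0_eq_abs, abs_of_nonneg dist_nonneg]
  exact hmain t ht.2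

end Forward


section Backward

lemma comap_eq_cocompact :
    Filter.comap (Subtype.val : ↥I01 → ℝ) (nhdsWithin (0:ℝ) (Set.Ioi 0)) = cocompact ↥I01 := by
  apply le_antisymm
  · intro s hs
    obtain ⟨C, hC, hCs⟩ := hasBasis_cocompact.mem_iff.mp hs
    have hδ : ∃ δ > (0:ℝ), ∀ t ∈ C, δ ≤ (t : ℝ) := by
      rcases C.eq_empty_or_nonempty with rfl | hCne
      · exact ⟨1, one_pos, fun t ht => absurd ht (Set.notMem_empty t)⟩
      · obtain ⟨t0, ht0, hmin⟩ := hC.exists_isMinOn hCne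
          (continuous_subtype_val.continuousOn)
        exact ⟨(t0 : ℝ), t0.2.1, fun t ht => hmin ht⟩
    obtain ⟨δ, hδpos, hδC⟩ := hδ
    refine mem_of_superset
      (preimage_mem_comap (Ioo_mem_nhdsGT_of_mem ⟨le_refl (0:ℝ), hδpos⟩)) ?_
    intro t ht
    apply hCs
    intro htC
    exact absurd (hδC t htC) (not_le.mpr ht.2)
  · intro s hs
    obtain ⟨u, hu, hus⟩ := mem_comap.mp hs
    obtain ⟨δ0, hδ0, hsub⟩ := mem_nhdsGT_iff_exists_Ioo_subset.mp hu
    set δ : ℝ := min δ0 1 with hδdef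
    have hδpos : 0 < δ := lt_min hδ0 one_pos
    refine hasBasis_cocompact.mem_iff.mpr ⟨{t : ↥I01 | δ ≤ (t : ℝ)}, ?_, ?_⟩
    · rw [IsEmbedding.subtypeVal.isCompact_iff]
      have himg : (Subtype.val : ↥I01 → ℝ) '' {t : ↥I01 | δ ≤ (t : ℝ)} = Set.Icc δ 1 := by
        ext r
        constructor
        · rintro ⟨t, ht, rfl⟩
          exact ⟨ht, t.2.2⟩
        · rintro ⟨h1, h2⟩
          exact ⟨⟨r, lt_of_lt_of_le hδpos h1, h2⟩, h1, rfl⟩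
      rw [himg]
      exact isCompact_Icc
    · intro t ht
      apply hus
      apply hsub
      refine ⟨t.2.1, ?_⟩
      simp only [Set.mem_compl_iff, Set.mem_setOf_eq, not_le] at ht
      exact lt_of_lt_of_le ht (min_le_left _ _)

lemma beta_tendsto (β : ↥I01 ≃ₜ ↥I01) :
    Tendsto (fun t : ↥I01 => ((β t : ℝ)))
      (Filter.comap (Subtype.val : ↥I01 → ℝ) (nhdsWithin (0:ℝ) (Set.Ioi 0))) (𝓝 0) := by
  rw [comap_eq_cocompact]
  have h1 : Tendsto β (cocompact ↥I01) (cocompact ↥I01) := by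
    have := tendsto_map (f := β) (x := cocompact ↥I01)
    rwa [β.map_cocompact] at this
  have h2 : Tendsto (Subtype.val : ↥I01 → ℝ) (cocompact ↥I01) (𝓝 0) := by
    rw [← comap_eq_cocompact]
    exact tendsto_comap.mono_right nhdsWithin_le_nhds
  exact h2.comp h1

variable {e f : I01 → K}

theorem backward (hKcomp : IsCompact K) (he : Continuous e) (hf : Continuous f)
    (α : ↥K ≃ₜ ↥K) (β : ↥I01 ≃ₜ ↥I01)
    (htend : Tendsto (fun t : I01 =>
        dist ((α (e t) : HilbertCube)) ((f (β t) : HilbertCube)))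
      (Filter.comap (Subtype.val : I01 → ℝ) (nhdsWithin 0 (Set.Ioi 0))) (nhds 0)) :
    Nonempty (↥(SpiralSet K e) ≃ₜ ↥(SpiralSet K f)) := by
  classical
  set Hf : ↥(SpiralSet K e) → ↥(SpiralSet K f) := fun x =>
    if hx : 0 < (x : ℝ × HilbertCube).1 then
      gphPt f (β ⟨(x : ℝ × HilbertCube).1, hx, fst_le_one x.2⟩)
    else
      remPt f (α ⟨(x : ℝ × HilbertCube).2, snd_mem x.2⟩) with hHfdef
  set Hg : ↥(SpiralSet K f) → ↥(SpiralSet K e) := fun y =>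
    if hy : 0 < (y : ℝ × HilbertCube).1 then
      gphPt e (β.symm ⟨(y : ℝ × HilbertCube).1, hy, fst_le_one y.2⟩)
    else
      remPt e (α.symm ⟨(y : ℝ × HilbertCube).2, snd_mem y.2⟩) with hHgdef
  have hHf_pos : ∀ (x : ↥(SpiralSet K e)) (hx : 0 < (x : ℝ × HilbertCube).1),
      Hf x = gphPt f (β ⟨(x : ℝ × HilbertCube).1, hx, fst_le_one x.2⟩) :=
    fun x hx => dif_pos hx
  have hHf_neg : ∀ (x : ↥(SpiralSet K e)), ¬ 0 < (x : ℝ × HilbertCube).1 →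
      Hf x = remPt f (α ⟨(x : ℝ × HilbertCube).2, snd_mem x.2⟩) :=
    fun x hx => dif_neg hx
  have hHg_pos : ∀ (y : ↥(SpiralSet K f)) (hy : 0 < (y : ℝ × HilbertCube).1),
      Hg y = gphPt e (β.symm ⟨(y : ℝ × HilbertCube).1, hy, fst_le_one y.2⟩) :=
    fun y hy => dif_pos hy
  have hHg_neg : ∀ (y : ↥(SpiralSet K f)), ¬ 0 < (y : ℝ × HilbertCube).1 →
      Hg y = remPt e (α.symm ⟨(y : ℝ × HilbertCube).2, snd_mem y.2⟩) :=
    fun y hy => dif_neg hy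
  have hleft : Function.LeftInverse Hg Hf := by
    intro x
    by_cases hx : 0 < (x : ℝ × HilbertCube).1
    · set τ : ↥I01 := ⟨(x : ℝ × HilbertCube).1, hx, fst_le_one x.2⟩ with hτdef
      rw [hHf_pos x hx]
      have h1 : 0 < ((gphPt f (β τ) : ↥(SpiralSet K f)) : ℝ × HilbertCube).1 := (β τ).2.1
      rw [hHg_pos _ h1]
      have h2 : (⟨((gphPt f (β τ) : ↥(SpiralSet K f)) : ℝ × HilbertCube).1, h1,
          fst_le_one (gphPt f (β τ)).2⟩ : ↥I01) = β τ := Subtype.ext rfl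
      rw [h2, β.symm_apply_apply]
      exact Subtype.ext (eq_graph x.2 hx).symm
    · set kx : ↥K := ⟨(x : ℝ × HilbertCube).2, snd_mem x.2⟩ with hkxdef
      rw [hHf_neg x hx]
      have h1 : ¬ 0 < ((remPt f (α kx) : ↥(SpiralSet K f)) : ℝ × HilbertCube).1 :=
        lt_irrefl 0
      rw [hHg_neg _ h1]
      have h2 : (⟨((remPt f (α kx) : ↥(SpiralSet K f)) : ℝ × HilbertCube).2,
          snd_mem (remPt f (α kx)).2⟩ : ↥K) = α kx := Subtype.ext rfl
      rw [h2, α.symm_apply_apply]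
      apply Subtype.ext
      show ((0:ℝ), (kx : HilbertCube)) = (x : ℝ × HilbertCube)
      have hfst := fst_eq_zero x.2 hx
      rw [← hfst]
  have hright : Function.RightInverse Hg Hf := by
    intro y
    by_cases hy : 0 < (y : ℝ × HilbertCube).1
    · set τ : ↥I01 := ⟨(y : ℝ × HilbertCube).1, hy, fst_le_one y.2⟩ with hτdef
      rw [hHg_pos y hy]
      have h1 : 0 < ((gphPt e (β.symm τ) : ↥(SpiralSet K e)) : ℝ × HilbertCube).1 :=
        (β.symm τ).2.1
      rw [hHf_pos _ h1]
      have h2 : (⟨((gphPt e (β.symm τ) : ↥(SpiralSet K e)) : ℝ × HilbertCube).1, h1,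
          fst_le_one (gphPt e (β.symm τ)).2⟩ : ↥I01) = β.symm τ := Subtype.ext rfl
      rw [h2, β.apply_symm_apply]
      exact Subtype.ext (eq_graph y.2 hy).symm
    · set ky : ↥K := ⟨(y : ℝ × HilbertCube).2, snd_mem y.2⟩ with hkydef
      rw [hHg_neg y hy]
      have h1 : ¬ 0 < ((remPt e (α.symm ky) : ↥(SpiralSet K e)) : ℝ × HilbertCube).1 :=
        lt_irrefl 0
      rw [hHf_neg _ h1]
      have h2 : (⟨((remPt e (α.symm ky) : ↥(SpiralSet K e)) : ℝ × HilbertCube).2,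
          snd_mem (remPt e (α.symm ky)).2⟩ : ↥K) = α.symm ky := Subtype.ext rfl
      rw [h2, α.apply_symm_apply]
      apply Subtype.ext
      show ((0:ℝ), (ky : HilbertCube)) = (y : ℝ × HilbertCube)
      have hfst := fst_eq_zero y.2 hy
      rw [← hfst]
  -- continuity of Hf
  have hHfc : Continuous Hf := by
    rw [continuous_iff_continuousAt]
    intro x
    by_cases hx : 0 < (x : ℝ × HilbertCube).1
    · -- graph point: locally a composition of continuous maps
      set t : ℝ := (x : ℝ × HilbertCube).1 with htdef
      have hle : t ≤ 1 := fst_le_one x.2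
      have h2 : (0:ℝ) < t/2 := by positivity
      set c : ℝ → I01 := fun r => ⟨max (t/2) (min r 1),
        lt_of_lt_of_le h2 (le_max_left _ _),
        max_le (by linarith) (min_le_right _ _)⟩ with hcdef
      have hcc : Continuous c :=
        Continuous.subtype_mk (continuous_const.max (continuous_id.min continuous_const)) _
      set G2 : ↥(SpiralSet K e) → ↥(SpiralSet K f) :=
        fun y => gphPt f (β (c ((y : ℝ × HilbertCube).1))) with hG2def
      have hG2c : Continuous G2 :=
        (gphPt_continuous hf).comp (β.continuous.comp
          (hcc.comp (continuous_fst.comp continuous_subtype_val)))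
      have hopen : IsOpen {y : ↥(SpiralSet K e) | t/2 < (y : ℝ × HilbertCube).1} :=
        IsOpen.preimage (continuous_fst.comp continuous_subtype_val) isOpen_Ioi
      have heq : G2 =ᶠ[𝓝 x] Hf := by
        refine Filter.eventuallyEq_of_mem (hopen.mem_nhds (show t/2 < t by linarith)) ?_
        intro y hy
        have hypos : 0 < (y : ℝ × HilbertCube).1 := lt_trans h2 hy
        have hyle : (y : ℝ × HilbertCube).1 ≤ 1 := fst_le_one y.2
        rw [hHf_pos y hypos]
        have hcy : c ((y : ℝ × HilbertCube).1) = ⟨(y : ℝ × HilbertCube).1, hypos, hyle⟩ := by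
          apply Subtype.ext
          show max (t/2) (min ((y : ℝ × HilbertCube).1) 1) = (y : ℝ × HilbertCube).1
          rw [min_eq_left hyle, max_eq_right (le_of_lt hy)]
        show gphPt f (β (c ((y : ℝ × HilbertCube).1))) = _
        rw [hcy]
      exact hG2c.continuousAt.congr heq
    · -- remainder point
      have hx1 : (x : ℝ × HilbertCube).1 = 0 := fst_eq_zero x.2 hx
      set kx : ↥K := ⟨(x : ℝ × HilbertCube).2, snd_mem x.2⟩ with hkxdef
      rw [Metric.continuousAt_iff]
      intro ε hε
      -- δ₁ from continuity of α at kx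
      have hαc : ContinuousAt (fun k : ↥K => (α k : HilbertCube)) kx :=
        (continuous_subtype_val.comp α.continuous).continuousAt
      obtain ⟨δ₁, hδ₁pos, hδ₁⟩ := Metric.continuousAt_iff.mp hαc (ε/2) (by positivity)
      -- δ₂ from htend
      have h2' : {t : ↥I01 | dist ((α (e t) : HilbertCube)) ((f (β t) : HilbertCube)) < ε/2}
          ∈ Filter.comap (Subtype.val : I01 → ℝ) (nhdsWithin 0 (Set.Ioi 0)) := by
        have := Metric.tendsto_nhds.mp htend (ε/2) (by positivity)
        refine this.mono fun t ht => ?_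
        rwa [Real.dist_0_eq_abs, abs_of_nonneg dist_nonneg] at ht
      obtain ⟨u₂, hu₂, hu₂sub⟩ := mem_comap.mp h2'
      obtain ⟨δ₂, hδ₂pos, hδ₂sub⟩ := mem_nhdsGT_iff_exists_Ioo_subset.mp hu₂
      -- δ₃ from beta_tendsto
      have h3' : {t : ↥I01 | ((β t : ℝ)) < ε}
          ∈ Filter.comap (Subtype.val : I01 → ℝ) (nhdsWithin 0 (Set.Ioi 0)) := by
        have := Metric.tendsto_nhds.mp (beta_tendsto β) ε hε
        refine this.mono fun t ht => ?_
        rwa [Real.dist_0_eq_abs, abs_of_nonneg (β t).2.1.le] at ht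
      obtain ⟨u₃, hu₃, hu₃sub⟩ := mem_comap.mp h3'
      obtain ⟨δ₃, hδ₃pos, hδ₃sub⟩ := mem_nhdsGT_iff_exists_Ioo_subset.mp hu₃
      refine ⟨min δ₁ (min δ₂ δ₃), lt_min hδ₁pos (lt_min hδ₂pos hδ₃pos), ?_⟩
      intro y hy
      rw [Subtype.dist_eq] at hy
      have hyd1 : dist ((y : ℝ × HilbertCube).1) ((x : ℝ × HilbertCube).1)
          ≤ dist (y : ℝ × HilbertCube) (x : ℝ × HilbertCube) := by
        rw [Prod.dist_eq]; exact le_max_left _ _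
      have hyd2 : dist ((y : ℝ × HilbertCube).2) ((x : ℝ × HilbertCube).2)
          ≤ dist (y : ℝ × HilbertCube) (x : ℝ × HilbertCube) := by
        rw [Prod.dist_eq]; exact le_max_right _ _
      rw [Subtype.dist_eq]
      by_cases hyp : 0 < (y : ℝ × HilbertCube).1
      · set τ : ↥I01 := ⟨(y : ℝ × HilbertCube).1, hyp, fst_le_one y.2⟩ with hτdef
        have hyval : (τ : ℝ) < min δ₁ (min δ₂ δ₃) := by
          have : dist ((y : ℝ × HilbertCube).1) ((x : ℝ × HilbertCube).1)
              = (y : ℝ × HilbertCube).1 := by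
            rw [hx1, Real.dist_0_eq_abs, abs_of_pos hyp]
          calc (τ : ℝ) = (y : ℝ × HilbertCube).1 := rfl
            _ = dist ((y : ℝ × HilbertCube).1) ((x : ℝ × HilbertCube).1) := this.symm
            _ ≤ _ := hyd1
            _ < _ := hy
        have hτδ₂ : (τ : ℝ) ∈ Set.Ioo (0:ℝ) δ₂ :=
          ⟨hyp, lt_of_lt_of_le hyval (le_trans (min_le_right _ _) (min_le_left _ _))⟩
        have hτδ₃ : (τ : ℝ) ∈ Set.Ioo (0:ℝ) δ₃ :=
          ⟨hyp, lt_of_lt_of_le hyval (le_trans (min_le_right _ _) (min_le_right _ _))⟩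
        have hd₂ : dist ((α (e τ) : HilbertCube)) ((f (β τ) : HilbertCube)) < ε/2 :=
          hu₂sub (hδ₂sub hτδ₂)
        have hd₃ : ((β τ : ℝ)) < ε := hu₃sub (hδ₃sub hτδ₃)
        have heτ : (e τ : HilbertCube) = (y : ℝ × HilbertCube).2 := (snd_eq y.2 hyp (fst_le_one y.2)).symm
        have hdke : dist (e τ) kx < δ₁ := by
          rw [Subtype.dist_eq]
          show dist ((e τ : HilbertCube)) ((x : ℝ × HilbertCube).2) < δ₁
          rw [heτ]
          exact lt_of_le_of_lt hyd2 (lt_of_lt_of_le hy (min_le_left _ _))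
        have hd₁ : dist ((α (e τ) : HilbertCube)) ((α kx : HilbertCube)) < ε/2 := hδ₁ hdke
        rw [hHf_pos y hyp, hHf_neg x hx]
        show dist (((β τ : ℝ)), (f (β τ) : HilbertCube)) ((0:ℝ), (α kx : HilbertCube)) < ε
        rw [Prod.dist_eq]
        apply max_lt
        · rw [Real.dist_eq, sub_zero, abs_of_pos (β τ).2.1]
          exact hd₃
        · calc dist ((f (β τ) : HilbertCube)) ((α kx : HilbertCube))
              ≤ dist ((f (β τ) : HilbertCube)) ((α (e τ) : HilbertCube))
                + dist ((α (e τ) : HilbertCube)) ((α kx : HilbertCube)) := dist_triangle _ _ _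
            _ < ε/2 + ε/2 := by
                rw [dist_comm ((f (β τ) : HilbertCube))]
                exact add_lt_add hd₂ hd₁
            _ = ε := by ring
      · set ky : ↥K := ⟨(y : ℝ × HilbertCube).2, snd_mem y.2⟩ with hkydef
        have hdk : dist ky kx < δ₁ := by
          rw [Subtype.dist_eq]
          exact lt_of_le_of_lt hyd2 (lt_of_lt_of_le hy (min_le_left _ _))
        have hd₁ : dist ((α ky : HilbertCube)) ((α kx : HilbertCube)) < ε/2 := hδ₁ hdk
        rw [hHf_neg y hyp, hHf_neg x hx]
        show dist ((0:ℝ), (α ky : HilbertCube)) ((0:ℝ), (α kx : HilbertCube)) < ε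
        rw [Prod.dist_eq]
        apply max_lt
        · rw [dist_self]; exact hε
        · linarith
  haveI : CompactSpace ↥(SpiralSet K e) :=
    isCompact_iff_compactSpace.mp (spiral_compact hKcomp he)
  exact ⟨Continuous.homeoOfEquivCompactToT2 (f := ⟨Hf, Hg, hleft, hright⟩) hHfc⟩

end Backward

end SpiralAux

/-- Let `K` be a nondegenerate continuum in the Hilbert cube and `e, f : (0,1] → K`
continuous compactifying maps. Then `S_e ≃ S_f` iff there are homeomorphisms `α` of `K`
and `β` of `(0,1]` such that `dist (α (e t), f (β t)) → 0` as `t → 0⁺`. -/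
theorem stmt_13 (K : Set HilbertCube) (hKcomp : IsCompact K) (hKconn : IsConnected K)
    (hKnd : K.Nontrivial)
    (e f : Set.Ioc (0:ℝ) 1 → K) (he : Continuous e) (hf : Continuous f)
    (hce : Compactifying K e) (hcf : Compactifying K f) :
    Nonempty (↥(SpiralSet K e) ≃ₜ ↥(SpiralSet K f)) ↔
      ∃ (α : ↥K ≃ₜ ↥K) (β : ↥(Set.Ioc (0:ℝ) 1) ≃ₜ ↥(Set.Ioc (0:ℝ) 1)),
        Tendsto (fun t : Set.Ioc (0:ℝ) 1 =>
            dist ((α (e t) : HilbertCube)) ((f (β t) : HilbertCube)))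
          (Filter.comap (Subtype.val : Set.Ioc (0:ℝ) 1 → ℝ) (nhdsWithin 0 (Set.Ioi 0)))
          (nhds 0) := by
  constructor
  · rintro ⟨h⟩
    exact SpiralAux.forward hKcomp hKnd he hf hce hcf h
  · rintro ⟨α, β, htend⟩
    exact SpiralAux.backward hKcomp he hf α β htend
end

section
/- In a compactification S_g = graph(g) ∪ ({0} × K) of the ray (0,1] with nondegenerate continuum remainder K, the graph of g is the unique dense arc-component of S_g; consequently every homeomorphism h : S_e → S_f maps graph(e) onto graph(f) and {0} × K onto {0} × K. -/
open TopologicalSpace Set Filter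

/-- The graph of `g` as a subset of `ℝ × Q`. -/
def GraphSet (K : Set HilbertCube) (g : Set.Ioc (0:ℝ) 1 → K) : Set (ℝ × HilbertCube) :=
  Set.range fun t : Set.Ioc (0:ℝ) 1 => ((t : ℝ), (g t : HilbertCube))

section Aux

variable {K : Set HilbertCube} {g : Set.Ioc (0:ℝ) 1 → K}

lemma graph_subset_spiral : GraphSet K g ⊆ SpiralSet K g := Set.subset_union_left

lemma mem_spiral_cases {z : ℝ × HilbertCube} (hz : z ∈ SpiralSet K g) :
    (∃ t : Set.Ioc (0:ℝ) 1, ((t : ℝ), (g t : HilbertCube)) = z) ∨ (z.1 = 0 ∧ z.2 ∈ K) := by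
  rcases hz with ⟨t, ht⟩ | hz
  · exact Or.inl ⟨t, ht⟩
  · exact Or.inr ⟨hz.1, hz.2⟩

lemma graph_fst_pos {z : ℝ × HilbertCube} (hz : z ∈ GraphSet K g) : 0 < z.1 := by
  obtain ⟨t, ht⟩ := hz
  rw [← ht]
  exact t.2.1

lemma spiral_fst_nonneg {z : ℝ × HilbertCube} (hz : z ∈ SpiralSet K g) : 0 ≤ z.1 := by
  rcases mem_spiral_cases hz with ⟨t, ht⟩ | hz
  · rw [← ht]; exact t.2.1.le
  · rw [hz.1]

lemma spiral_snd_of_fst {z : ℝ × HilbertCube} (hz : z ∈ SpiralSet K g)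
    (s : Set.Ioc (0:ℝ) 1) (h1 : z.1 = (s : ℝ)) : z.2 = (g s : HilbertCube) := by
  rcases mem_spiral_cases hz with ⟨t, ht⟩ | hz0
  · have hts : t = s := by
      apply Subtype.ext
      have := congrArg Prod.fst ht
      simpa [h1] using this
    rw [← ht, hts]
  · exfalso; rw [hz0.1] at h1; exact absurd h1.symm (ne_of_gt s.2.1)

lemma spiral_rem_of_fst_zero {z : ℝ × HilbertCube} (hz : z ∈ SpiralSet K g)
    (h1 : z.1 = 0) : z.2 ∈ K := by
  rcases mem_spiral_cases hz with ⟨t, ht⟩ | hz0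
  · exfalso
    have := congrArg Prod.fst ht
    simp only at this
    rw [h1] at this; exact absurd this (ne_of_gt t.2.1)
  · exact hz0.2

lemma mem_rem_iff_not_graph {z : ℝ × HilbertCube} (hz : z ∈ SpiralSet K g) :
    z ∈ ({0} ×ˢ K : Set (ℝ × HilbertCube)) ↔ z ∉ GraphSet K g := by
  constructor
  · rintro ⟨h0, _⟩ hG
    have := graph_fst_pos hG
    simp only [Set.mem_singleton_iff] at h0
    rw [h0] at this; exact lt_irrefl _ this
  · intro hG
    rcases hz with h | h
    · exact absurd h hG
    · exact h

/-- Density of the graph in the spiral set. -/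
lemma dense_graph (hcg : Compactifying K g) :
    Dense {x : ↥(SpiralSet K g) | (x : ℝ × HilbertCube) ∈ GraphSet K g} := by
  intro x
  rw [closure_subtype]
  have himg : Subtype.val '' {x : ↥(SpiralSet K g) | (x : ℝ × HilbertCube) ∈ GraphSet K g}
      = SpiralSet K g ∩ GraphSet K g := Subtype.image_preimage_coe _ _
  rw [himg, Set.inter_eq_right.mpr graph_subset_spiral]
  rcases mem_spiral_cases x.2 with ⟨t, ht⟩ | ⟨h0, hK⟩
  · exact subset_closure ⟨t, ht⟩
  · rw [Metric.mem_closure_iff]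
    intro ε hε
    have hk : (x : ℝ × HilbertCube).2 ∈
        closure ((fun t : Set.Ioc (0:ℝ) 1 => (g t : HilbertCube)) '' {t | (t : ℝ) < ε}) :=
      Set.mem_iInter₂.mp (hcg.ge hK) ε hε
    rw [Metric.mem_closure_iff] at hk
    obtain ⟨q, ⟨s, hs, rfl⟩, hq⟩ := hk ε hε
    refine ⟨((s : ℝ), (g s : HilbertCube)), ⟨s, rfl⟩, ?_⟩
    rw [Prod.dist_eq]
    apply max_lt
    · rw [h0, Real.dist_eq, abs_of_nonpos (by linarith [s.2.1])]
      simpa using hs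
    · exact hq

/-- Any two points of the graph are joined in the spiral set. -/
lemma joined_graph (hg : Continuous g) (x y : ↥(SpiralSet K g))
    (hx : (x : ℝ × HilbertCube) ∈ GraphSet K g)
    (hy : (y : ℝ × HilbertCube) ∈ GraphSet K g) : Joined x y := by
  obtain ⟨s, hs⟩ := hx
  obtain ⟨t, ht⟩ := hy
  have hmem : ∀ u : unitInterval, ((1 - (u:ℝ)) * s + u * t) ∈ Set.Ioc (0:ℝ) 1 := by
    intro u
    have h1 : (0:ℝ) ≤ 1 - (u:ℝ) := by linarith [u.2.2]
    have h2 : (0:ℝ) ≤ (u:ℝ) := u.2.1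
    have := convex_Ioc (0:ℝ) 1 s.2 t.2 h1 h2 (by ring)
    simpa [smul_eq_mul] using this
  set σ : unitInterval → Set.Ioc (0:ℝ) 1 := fun u => ⟨(1 - (u:ℝ)) * s + u * t, hmem u⟩ with hσ
  have hσc : Continuous σ := by
    apply Continuous.subtype_mk
    fun_prop
  refine ⟨⟨⟨fun u => ⟨((σ u : ℝ), (g (σ u) : HilbertCube)), Or.inl ⟨σ u, rfl⟩⟩, ?_⟩, ?_, ?_⟩⟩
  · apply Continuous.subtype_mk
    exact (continuous_subtype_val.comp hσc).prodMk
      (continuous_subtype_val.comp (hg.comp hσc))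
  · apply Subtype.ext
    have h0 : σ 0 = s := by
      apply Subtype.ext
      show (1 - ((0:unitInterval):ℝ)) * s + ((0:unitInterval):ℝ) * t = (s:ℝ)
      norm_num
    show (((σ 0 : Set.Ioc (0:ℝ) 1) : ℝ), (g (σ 0) : HilbertCube)) = (x : ℝ × HilbertCube)
    rw [h0]
    exact hs
  · apply Subtype.ext
    have h1 : σ 1 = t := by
      apply Subtype.ext
      show (1 - ((1:unitInterval):ℝ)) * s + ((1:unitInterval):ℝ) * t = (t:ℝ)
      norm_num
    show (((σ 1 : Set.Ioc (0:ℝ) 1) : ℝ), (g (σ 1) : HilbertCube)) = (y : ℝ × HilbertCube)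
    rw [h1]
    exact ht

/-- A graph point cannot be joined to a remainder point. -/
lemma not_joined (hKnd : K.Nontrivial) (hcg : Compactifying K g)
    (x y : ↥(SpiralSet K g)) (hx : (x : ℝ × HilbertCube) ∈ GraphSet K g)
    (hy : (y : ℝ × HilbertCube).1 = 0) : ¬ Joined x y := by
  rintro ⟨γ⟩
  set Γ : ℝ → ℝ × HilbertCube := fun u => (γ.extend u : ℝ × HilbertCube) with hΓ
  have hΓc : Continuous Γ := continuous_subtype_val.comp γ.continuous_extend
  have hΓS : ∀ u, Γ u ∈ SpiralSet K g := fun u => (γ.extend u).2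
  set φ : ℝ → ℝ := fun u => (Γ u).1 with hφ
  have hφc : Continuous φ := continuous_fst.comp hΓc
  have hΓ0 : Γ 0 = (x : ℝ × HilbertCube) := by rw [hΓ]; simp
  have hΓ1 : Γ 1 = (y : ℝ × HilbertCube) := by rw [hΓ]; simp
  have hφ0 : 0 < φ 0 := by rw [hφ]; simp only [hΓ0]; exact graph_fst_pos hx
  have hφ1 : φ 1 = 0 := by rw [hφ]; simp only [hΓ1]; exact hy
  have hlb : ∀ u ∈ {u : ℝ | φ u = 0}, (0:ℝ) ≤ u := by
    intro u hu
    by_contra hlt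
    push_neg at hlt
    have h1 : Γ u = Γ 0 := by
      rw [hΓ]; simp only
      rw [γ.extend_of_le_zero hlt.le, γ.extend_of_le_zero le_rfl]
    have h2 : φ u = φ 0 := by rw [hφ]; simp only [h1]
    rw [hu] at h2; exact absurd h2.symm (ne_of_gt hφ0)
  set Z : Set ℝ := {u | φ u = 0} with hZ
  have hZc : IsClosed Z := isClosed_eq hφc continuous_const
  have hZne : Z.Nonempty := ⟨1, hφ1⟩
  have hZbdd : BddBelow Z := ⟨0, hlb⟩
  set T : ℝ := sInf Z with hT
  have hTZ : φ T = 0 := hZc.csInf_mem hZne hZbdd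
  have hTnn : 0 ≤ T := le_csInf hZne hlb
  have hT0 : 0 < T := by
    rcases eq_or_lt_of_le hTnn with h | h
    · exfalso; rw [← h] at hTZ; exact absurd hTZ (ne_of_gt hφ0)
    · exact h
  have hφpos : ∀ u, u < T → 0 < φ u := by
    intro u hu
    have hne : φ u ≠ 0 := fun h => notMem_of_lt_csInf hu hZbdd h
    have hnn : 0 ≤ φ u := spiral_fst_nonneg (hΓS u)
    exact lt_of_le_of_ne hnn (Ne.symm hne)
  -- the limit point k and a different point k'
  set k : HilbertCube := (Γ T).2 with hk
  have hkK : k ∈ K := spiral_rem_of_fst_zero (hΓS T) hTZ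
  obtain ⟨k', hk'K, hk'ne⟩ := hKnd.exists_ne k
  set d : ℝ := dist k' k / 2 with hd
  have hdpos : 0 < d := by
    rw [hd]
    have : 0 < dist k' k := dist_pos.mpr hk'ne
    linarith
  -- continuity of Γ at T
  obtain ⟨δ, hδpos, hδ⟩ := Metric.continuousAt_iff.mp (hΓc.continuousAt (x := T)) d hdpos
  set t₀ : ℝ := max (T - δ/2) (T/2) with ht₀
  have ht₀T : t₀ < T := max_lt (by linarith) (by linarith)
  have ht₀pos : 0 < t₀ := lt_of_lt_of_le (by linarith) (le_max_right _ _)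
  have ht₀near : T - t₀ ≤ δ/2 := by
    have := le_max_left (T - δ/2) (T/2)
    rw [ht₀] at *
    linarith [le_max_left (T - δ/2) (T/2)]
  set a : ℝ := φ t₀ with ha
  have hapos : 0 < a := hφpos t₀ ht₀T
  -- find a point of the graph near k' with small first coordinate
  have hk'cl : k' ∈ closure
      ((fun t : Set.Ioc (0:ℝ) 1 => (g t : HilbertCube)) '' {t | (t : ℝ) < a}) :=
    Set.mem_iInter₂.mp (hcg.ge hk'K) a hapos
  rw [Metric.mem_closure_iff] at hk'cl
  obtain ⟨q, ⟨s, hs, rfl⟩, hq⟩ := hk'cl d hdpos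
  -- by the intermediate value theorem, φ attains the value s on [t₀, T]
  have hIVT : (s : ℝ) ∈ φ '' Set.Icc t₀ T := by
    apply intermediate_value_Icc' ht₀T.le hφc.continuousOn
    rw [hTZ]
    exact ⟨s.2.1.le, hs.le⟩
  obtain ⟨t, htmem, htval⟩ := hIVT
  have htT : t ≠ T := by
    intro h; rw [h, hTZ] at htval; exact absurd htval.symm (ne_of_gt s.2.1)
  have hsnd : (Γ t).2 = (g s : HilbertCube) := spiral_snd_of_fst (hΓS t) s htval
  -- t is within δ of T
  have hdistt : dist t T < δ := by
    rw [Real.dist_eq, abs_of_nonpos (by linarith [htmem.2])]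
    linarith [htmem.1]
  have hnear : dist (Γ t) (Γ T) < d := hδ hdistt
  have hle : dist (Γ t).2 (Γ T).2 ≤ dist (Γ t) (Γ T) := by
    rw [Prod.dist_eq]; exact le_max_right _ _
  have hnear2 : dist ((g s : HilbertCube)) k < d := by
    rw [← hsnd, hk]
    exact lt_of_le_of_lt hle hnear
  have htri : dist k' k ≤ dist k' ((g s : HilbertCube)) + dist ((g s : HilbertCube)) k :=
    dist_triangle k' ((g s : HilbertCube)) k
  have hq' : dist k' ((g s : HilbertCube)) < d := hq
  have hdd : d = dist k' k / 2 := hd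
  linarith

lemma remainder_closed (hKcomp : IsCompact K) :
    IsClosed {y : ↥(SpiralSet K g) | (y : ℝ × HilbertCube).1 = 0} :=
  isClosed_eq (continuous_fst.comp continuous_subtype_val) continuous_const

/-- The graph is the path component of any of its points. -/
lemma pc_graph (hg : Continuous g) (hKnd : K.Nontrivial) (hcg : Compactifying K g)
    (x : ↥(SpiralSet K g)) (hx : (x : ℝ × HilbertCube) ∈ GraphSet K g) :
    pathComponent x = {y : ↥(SpiralSet K g) | (y : ℝ × HilbertCube) ∈ GraphSet K g} := by
  ext y
  constructor
  · intro hy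
    by_contra hyG
    have hy0 : (y : ℝ × HilbertCube).1 = 0 :=
      ((mem_rem_iff_not_graph y.2).mpr hyG).1
    exact not_joined hKnd hcg x y hx hy0 hy
  · intro hyG
    exact joined_graph hg x y hx hyG

/-- The graph is the unique dense path component. -/
lemma pc_dense (hg : Continuous g) (hKnd : K.Nontrivial) (hcg : Compactifying K g)
    (x : ↥(SpiralSet K g)) (hd : Dense (pathComponent x)) :
    pathComponent x = {y : ↥(SpiralSet K g) | (y : ℝ × HilbertCube) ∈ GraphSet K g} := by
  by_cases hx : (x : ℝ × HilbertCube) ∈ GraphSet K g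
  · exact pc_graph hg hKnd hcg x hx
  exfalso
  have hx0 : (x : ℝ × HilbertCube).1 = 0 := ((mem_rem_iff_not_graph x.2).mpr hx).1
  set R : Set ↥(SpiralSet K g) := {y | (y : ℝ × HilbertCube).1 = 0} with hR
  have hsub : pathComponent x ⊆ R := by
    intro y hy
    by_contra hyR
    have hyG : (y : ℝ × HilbertCube) ∈ GraphSet K g := by
      rcases y.2 with h | h
      · exact h
      · exact absurd h.1 hyR
    exact not_joined hKnd hcg y x hyG hx0 hy.symm
  have hRc : IsClosed R :=
    isClosed_eq (continuous_fst.comp continuous_subtype_val) continuous_const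
  have huniv : R = Set.univ := by
    apply Set.eq_univ_of_univ_subset
    rw [← hd.closure_eq]
    exact (closure_mono hsub).trans (le_of_eq hRc.closure_eq)
  have h1 : (⟨((1:ℝ), (g ⟨1, by norm_num⟩ : HilbertCube)),
      Or.inl ⟨⟨1, by norm_num⟩, rfl⟩⟩ : ↥(SpiralSet K g)) ∈ R := huniv ▸ Set.mem_univ _
  simp only [hR, Set.mem_setOf_eq] at h1
  norm_num at h1

end Aux

/-- In a compactification `S_g = graph(g) ∪ ({0} × K)` of the ray `(0,1]` with
nondegenerate continuum remainder `K`, the graph of `g` is the unique dense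
arc-component (= path component, as these coincide in compact metrizable spaces);
consequently any homeomorphism `h : S_e → S_f` maps `graph(e)` onto `graph(f)` and
`{0} × K` onto `{0} × K`. -/
theorem stmt_15 (K : Set HilbertCube) (hKcomp : IsCompact K) (hKconn : IsConnected K)
    (hKnd : K.Nontrivial)
    (e f : Set.Ioc (0:ℝ) 1 → K) (he : Continuous e) (hf : Continuous f)
    (hce : Compactifying K e) (hcf : Compactifying K f) :
    -- the graph of `e` is dense in `S_e`
    Dense {x : ↥(SpiralSet K e) | (x : ℝ × HilbertCube) ∈ GraphSet K e} ∧
    -- the graph of `e` is an arc-component of `S_e`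
    (∀ x : ↥(SpiralSet K e), (x : ℝ × HilbertCube) ∈ GraphSet K e →
      pathComponent x = {y : ↥(SpiralSet K e) | (y : ℝ × HilbertCube) ∈ GraphSet K e}) ∧
    -- it is the unique dense arc-component of `S_e`
    (∀ x : ↥(SpiralSet K e), Dense (pathComponent x) →
      pathComponent x = {y : ↥(SpiralSet K e) | (y : ℝ × HilbertCube) ∈ GraphSet K e}) ∧
    -- consequently every homeomorphism `S_e ≃ₜ S_f` preserves graph and remainder
    (∀ h : ↥(SpiralSet K e) ≃ₜ ↥(SpiralSet K f),
      (∀ x : ↥(SpiralSet K e),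
        ((x : ℝ × HilbertCube) ∈ GraphSet K e ↔ (h x : ℝ × HilbertCube) ∈ GraphSet K f)) ∧
      (∀ x : ↥(SpiralSet K e),
        ((x : ℝ × HilbertCube) ∈ ({0} ×ˢ K : Set (ℝ × HilbertCube)) ↔
          (h x : ℝ × HilbertCube) ∈ ({0} ×ˢ K : Set (ℝ × HilbertCube))))) := by
  have key : ∀ (g₁ g₂ : Set.Ioc (0:ℝ) 1 → K), Continuous g₁ → Continuous g₂ →
      Compactifying K g₁ → Compactifying K g₂ →
      ∀ (h : ↥(SpiralSet K g₁) ≃ₜ ↥(SpiralSet K g₂)) (x : ↥(SpiralSet K g₁)),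
      (x : ℝ × HilbertCube) ∈ GraphSet K g₁ →
      (h x : ℝ × HilbertCube) ∈ GraphSet K g₂ := by
    intro g₁ g₂ hg₁ hg₂ hc₁ hc₂ h x hx
    have h1 : pathComponent x = {y : ↥(SpiralSet K g₁) | (y : ℝ × HilbertCube) ∈ GraphSet K g₁} :=
      pc_graph hg₁ hKnd hc₁ x hx
    have h2 : Dense (pathComponent x) := h1 ▸ dense_graph hc₁
    have himg : (⇑h) '' (pathComponent x) ⊆ pathComponent (h x) := by
      rintro _ ⟨y, hy, rfl⟩
      obtain ⟨γ⟩ := hy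
      exact ⟨γ.map h.continuous⟩
    have hdimg : Dense ((⇑h) '' (pathComponent x)) := by
      rw [dense_iff_closure_eq, ← Homeomorph.image_closure, h2.closure_eq, Set.image_univ]
      exact h.surjective.range_eq
    have hd3 : Dense (pathComponent (h x)) := hdimg.mono himg
    have h4 := pc_dense hg₂ hKnd hc₂ (h x) hd3
    have h5 : h x ∈ pathComponent (h x) := mem_pathComponent_self _
    rw [h4] at h5
    exact h5
  refine ⟨dense_graph hce, fun x hx => pc_graph he hKnd hce x hx,
    fun x hd => pc_dense he hKnd hce x hd, fun h => ?_⟩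
  have hiff : ∀ x : ↥(SpiralSet K e),
      ((x : ℝ × HilbertCube) ∈ GraphSet K e ↔ (h x : ℝ × HilbertCube) ∈ GraphSet K f) := by
    intro x
    constructor
    · exact key e f he hf hce hcf h x
    · intro hx
      have := key f e hf he hcf hce h.symm (h x) hx
      rwa [h.symm_apply_apply] at this
  refine ⟨hiff, fun x => ?_⟩
  rw [mem_rem_iff_not_graph x.2, mem_rem_iff_not_graph (h x).2]
  exact not_congr (hiff x)
end

section
/- Suppose C ⊆ K(Q) is uniquely Polishable, witnessed by Polish spaces X, Y and a perfect map π : X → Y such that every member of C is homeomorphic to exactly one fiber of π. Then for every Polish subspace T ⊆ C, the restriction of the homeomorphism equivalence relation H to T is smooth. -/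
open TopologicalSpace Metric EMetric Set Filter Topology

/-- Borel sets on the hyperspace `K(Q)`. -/
noncomputable instance : MeasurableSpace (NonemptyCompacts HilbertCube) :=
  borel _

instance : BorelSpace (NonemptyCompacts HilbertCube) := ⟨rfl⟩

section Aux
variable {α β : Type*} [MetricSpace α] [MetricSpace β]

theorem aux_hausdorffEdist_image_le {f : α → β} (hf : LipschitzWith 1 f) (s t : Set α) :
    hausdorffEdist (f '' s) (f '' t) ≤ hausdorffEdist s t := by
  apply hausdorffEdist_le_of_infEdist
  · rintro x ⟨a, ha, rfl⟩
    calc infEdist (f a) (f '' t) ≤ infEdist a t := by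
          rw [infEdist, infEdist]
          refine le_iInf₂ fun b hb => ?_
          calc (⨅ y ∈ f '' t, edist (f a) y) ≤ edist (f a) (f b) :=
                iInf₂_le _ (mem_image_of_mem f hb)
            _ ≤ 1 * edist a b := hf.edist_le_mul a b
            _ = edist a b := one_mul _
      _ ≤ hausdorffEdist s t := infEdist_le_hausdorffEdist_of_mem ha
  · rintro x ⟨a, ha, rfl⟩
    calc infEdist (f a) (f '' s) ≤ infEdist a s := by
          rw [infEdist, infEdist]
          refine le_iInf₂ fun b hb => ?_
          calc (⨅ y ∈ f '' s, edist (f a) y) ≤ edist (f a) (f b) :=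
                iInf₂_le _ (mem_image_of_mem f hb)
            _ ≤ 1 * edist a b := hf.edist_le_mul a b
            _ = edist a b := one_mul _
      _ ≤ hausdorffEdist t s := infEdist_le_hausdorffEdist_of_mem ha
      _ = hausdorffEdist s t := hausdorffEdist_comm

/-- image of a nonempty compact under a continuous map -/
noncomputable def necMap (f : α → β) (hf : Continuous f) (s : NonemptyCompacts α) :
    NonemptyCompacts β :=
  ⟨⟨f '' s, s.isCompact.image hf⟩, s.nonempty.image f⟩

@[simp] theorem necMap_coe {f : α → β} (hf : Continuous f) (s : NonemptyCompacts α) :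
    (necMap f hf s : Set β) = f '' s := rfl

theorem necMap_lipschitz {f : α → β} (hf : LipschitzWith 1 f) :
    LipschitzWith 1 (necMap f hf.continuous) := by
  intro s t
  simp only [ENNReal.coe_one, one_mul]
  exact aux_hausdorffEdist_image_le hf s t


/-- If `S n → L` in the hyperspace and `x ∈ L`, we can approximate `x` by points of `S n`. -/
theorem aux_exists_mem_tendsto {S : ℕ → NonemptyCompacts α} {L : NonemptyCompacts α}
    (h : Tendsto S atTop (𝓝 L)) {x : α} (hx : x ∈ (L : Set α)) :
    ∃ u : ℕ → α, (∀ n, u n ∈ (S n : Set α)) ∧ Tendsto u atTop (𝓝 x) := by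
  have hd : Tendsto (fun n => dist (S n) L) atTop (𝓝 0) :=
    (tendsto_iff_dist_tendsto_zero.1 h)
  choose u hu hdu using fun n => (S n).isCompact.exists_infDist_eq_dist (S n).nonempty x
  refine ⟨u, hu, ?_⟩
  rw [tendsto_iff_dist_tendsto_zero]
  have hb : ∀ n, dist (u n) x ≤ dist (S n) L := by
    intro n
    rw [dist_comm, ← hdu n]
    calc infDist x (S n : Set α) ≤ hausdorffDist (L : Set α) (S n : Set α) :=
          infDist_le_hausdorffDist_of_mem hx (edist_ne_top L (S n))
      _ = dist (S n) L := by rw [NonemptyCompacts.dist_eq, hausdorffDist_comm]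
  exact squeeze_zero (fun n => dist_nonneg) hb hd

/-- If `S n → L` and `u n ∈ S n`, some subsequence of `u` converges to a point of `L`. -/
theorem aux_tendsto_subseq {S : ℕ → NonemptyCompacts α} {L : NonemptyCompacts α}
    (h : Tendsto S atTop (𝓝 L)) {u : ℕ → α} (hu : ∀ n, u n ∈ (S n : Set α)) :
    ∃ x ∈ (L : Set α), ∃ ψ : ℕ → ℕ, StrictMono ψ ∧ Tendsto (u ∘ ψ) atTop (𝓝 x) := by
  have hd : Tendsto (fun n => dist (S n) L) atTop (𝓝 0) :=
    (tendsto_iff_dist_tendsto_zero.1 h)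
  choose v hv hdv using fun n => L.isCompact.exists_infDist_eq_dist L.nonempty (u n)
  have hb : ∀ n, dist (u n) (v n) ≤ dist (S n) L := by
    intro n
    rw [← hdv n]
    calc infDist (u n) (L : Set α) ≤ hausdorffDist (S n : Set α) (L : Set α) :=
          infDist_le_hausdorffDist_of_mem (hu n) (edist_ne_top (S n) L)
      _ = dist (S n) L := (NonemptyCompacts.dist_eq).symm
  have huv : Tendsto (fun n => dist (u n) (v n)) atTop (𝓝 0) :=
    squeeze_zero (fun n => dist_nonneg) hb hd
  obtain ⟨x, hxL, ψ, hψ, hvx⟩ := L.isCompact.tendsto_subseq hv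
  refine ⟨x, hxL, ψ, hψ, ?_⟩
  rw [tendsto_iff_dist_tendsto_zero]
  have : ∀ n, dist (u (ψ n)) x ≤ dist (u (ψ n)) (v (ψ n)) + dist (v (ψ n)) x := fun n =>
    dist_triangle _ _ _
  refine squeeze_zero (fun n => dist_nonneg) this ?_
  have h1 : Tendsto (fun n => dist (u (ψ n)) (v (ψ n))) atTop (𝓝 0) :=
    huv.comp (hψ.tendsto_atTop)
  have h2 : Tendsto (fun n => dist (v (ψ n)) x) atTop (𝓝 0) :=
    tendsto_iff_dist_tendsto_zero.1 hvx
  simpa using h1.add h2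

/-- The subset relation is closed in the hyperspace. -/
theorem aux_isClosed_subsetRel :
    IsClosed {p : NonemptyCompacts α × NonemptyCompacts α | (p.1 : Set α) ⊆ (p.2 : Set α)} := by
  refine IsSeqClosed.isClosed ?_
  intro p q hp hpq
  have h1 : Tendsto (fun n => (p n).1) atTop (𝓝 q.1) := (continuous_fst.tendsto q).comp hpq
  have h2 : Tendsto (fun n => (p n).2) atTop (𝓝 q.2) := (continuous_snd.tendsto q).comp hpq
  intro x hx
  obtain ⟨u, hu, hux⟩ := aux_exists_mem_tendsto h1 hx
  have hu2 : ∀ n, u n ∈ ((p n).2 : Set α) := fun n => hp n (hu n)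
  obtain ⟨x', hx', ψ, hψ, hx'2⟩ := aux_tendsto_subseq h2 hu2
  have : x' = x := tendsto_nhds_unique hx'2 (hux.comp hψ.tendsto_atTop)
  rwa [this] at hx'

/-- The set of pairs `(b, S)` such that `g` maps `S` into `{b}` is closed. -/
theorem aux_isClosed_mapEq {g : α → β} (hg : Continuous g) :
    IsClosed {p : β × NonemptyCompacts α | ∀ x ∈ (p.2 : Set α), g x = p.1} := by
  refine IsSeqClosed.isClosed ?_
  intro p q hp hpq
  have h1 : Tendsto (fun n => (p n).1) atTop (𝓝 q.1) := (continuous_fst.tendsto q).comp hpq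
  have h2 : Tendsto (fun n => (p n).2) atTop (𝓝 q.2) := (continuous_snd.tendsto q).comp hpq
  intro x hx
  obtain ⟨u, hu, hux⟩ := aux_exists_mem_tendsto h2 hx
  have : Tendsto (fun n => g (u n)) atTop (𝓝 (g x)) := (hg.tendsto x).comp hux
  have h3 : Tendsto (fun n => g (u n)) atTop (𝓝 q.1) := by
    have := h1
    simpa [fun n => hp n (u n) (hu n)] using h1
  exact tendsto_nhds_unique this h3


/-- Nonempty compacts `R` such that on `R`, `a p = a q → b p = b q`, form a Borel set. -/
theorem aux_measurableSet_graphLike {γ δ δ' : Type*} [MetricSpace γ] [MetricSpace δ]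
    [MetricSpace δ'] [MeasurableSpace (NonemptyCompacts γ)] [BorelSpace (NonemptyCompacts γ)]
    {a : γ → δ} {b : γ → δ'} (ha : Continuous a) (hb : Continuous b) :
    MeasurableSet {R : NonemptyCompacts γ |
      ∀ p ∈ (R : Set γ), ∀ q ∈ (R : Set γ), a p = a q → b p = b q} := by
  have hE : ∀ n : ℕ, IsClosed {R : NonemptyCompacts γ |
      ∃ p ∈ (R : Set γ), ∃ q ∈ (R : Set γ),
        a p = a q ∧ 1 / (n + 1 : ℝ) ≤ dist (b p) (b q)} := by
    intro n
    refine IsSeqClosed.isClosed ?_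
    intro S L hS hSL
    choose p hp q hq hab hd using hS
    obtain ⟨x, hxL, ψ, hψ, hx⟩ := aux_tendsto_subseq hSL hp
    have hq' : ∀ k, q (ψ k) ∈ ((S (ψ k) : Set γ)) := fun k => hq (ψ k)
    obtain ⟨y, hyL, ψ', hψ', hy⟩ := aux_tendsto_subseq (hSL.comp hψ.tendsto_atTop) hq'
    refine ⟨x, hxL, y, hyL, ?_, ?_⟩
    · have h1 : Tendsto (fun k => a (p (ψ (ψ' k)))) atTop (𝓝 (a x)) :=
        (ha.tendsto x).comp (hx.comp hψ'.tendsto_atTop)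
      have h2 : Tendsto (fun k => a (q (ψ (ψ' k)))) atTop (𝓝 (a y)) :=
        (ha.tendsto y).comp hy
      exact tendsto_nhds_unique (by simpa [fun m => hab m] using h1) h2
    · have h1 : Tendsto (fun k => dist (b (p (ψ (ψ' k)))) (b (q (ψ (ψ' k))))) atTop
          (𝓝 (dist (b x) (b y))) := by
        have hbx : Tendsto (fun k => b (p (ψ (ψ' k)))) atTop (𝓝 (b x)) :=
          (hb.tendsto x).comp (hx.comp hψ'.tendsto_atTop)
        have hby : Tendsto (fun k => b (q (ψ (ψ' k)))) atTop (𝓝 (b y)) :=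
          (hb.tendsto y).comp hy
        exact hbx.dist hby
      exact le_of_tendsto_of_tendsto tendsto_const_nhds h1
        (Eventually.of_forall fun k => hd (ψ (ψ' k)))
  have : {R : NonemptyCompacts γ |
      ∀ p ∈ (R : Set γ), ∀ q ∈ (R : Set γ), a p = a q → b p = b q} =
      (⋃ n : ℕ, {R : NonemptyCompacts γ |
      ∃ p ∈ (R : Set γ), ∃ q ∈ (R : Set γ),
        a p = a q ∧ 1 / (n + 1 : ℝ) ≤ dist (b p) (b q)})ᶜ := by
    ext R
    simp only [mem_compl_iff, mem_iUnion, mem_setOf_eq, not_exists, not_and]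
    constructor
    · intro h n p hp q hq hab
      have := h p hp q hq hab
      rw [this]
      simp only [dist_self, not_le]
      positivity
    · intro h p hp q hq hab
      by_contra hne
      have hpos : 0 < dist (b p) (b q) := dist_pos.2 hne
      obtain ⟨n, hn⟩ := exists_nat_one_div_lt hpos
      exact h n p hp q hq hab hn.le
  rw [this]
  exact (MeasurableSet.iUnion fun n => (hE n).measurableSet).compl

/-- For a proper map `π`, the set of pairs `(y, S)` with `π ⁻¹' {y} ⊆ S` is Borel. -/
theorem aux_measurableSet_fiberSubset {X Y : Type*} [MetricSpace X] [MetricSpace Y]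
    [MeasurableSpace (Y × NonemptyCompacts X)] [BorelSpace (Y × NonemptyCompacts X)]
    {π : X → Y} (hproper : IsProperMap π) :
    MeasurableSet {p : Y × NonemptyCompacts X | π ⁻¹' {p.1} ⊆ (p.2 : Set X)} := by
  have hC : ∀ n : ℕ, IsClosed {q : X × NonemptyCompacts X |
      1 / (n + 1 : ℝ) ≤ infDist q.1 (q.2 : Set X)} := by
    intro n
    exact isClosed_le continuous_const Metric.lipschitz_infDist.continuous
  have hD : ∀ n : ℕ, IsClosed (Prod.map π (id : NonemptyCompacts X → NonemptyCompacts X) ''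
      {q : X × NonemptyCompacts X | 1 / (n + 1 : ℝ) ≤ infDist q.1 (q.2 : Set X)}) := by
    intro n
    exact (hproper.prodMap isProperMap_id).isClosedMap _ (hC n)
  have heq : {p : Y × NonemptyCompacts X | π ⁻¹' {p.1} ⊆ (p.2 : Set X)} =
      ⋂ n : ℕ, (Prod.map π (id : NonemptyCompacts X → NonemptyCompacts X) ''
      {q : X × NonemptyCompacts X | 1 / (n + 1 : ℝ) ≤ infDist q.1 (q.2 : Set X)})ᶜ := by
    ext p
    simp only [mem_setOf_eq, mem_iInter, mem_compl_iff, mem_image, Prod.exists, Prod.map_apply,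
      id_eq, Prod.mk.injEq, not_exists, not_and]
    constructor
    · intro h n x S hxS hπx
      obtain ⟨p1, p2⟩ := p
      simp only [Prod.mk.injEq] at hπx
      obtain ⟨rfl, rfl⟩ := hπx
      have hx : x ∈ π ⁻¹' {π x} := rfl
      have hmem := h hx
      have h0 : infDist x (S : Set X) = 0 := infDist_zero_of_mem hmem
      rw [h0] at hxS
      have : (0:ℝ) < 1 / (n + 1 : ℝ) := by positivity
      linarith
    · intro h x hx
      simp only [mem_preimage, mem_singleton_iff] at hx
      have h0 : infDist x (p.2 : Set X) ≤ 0 := by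
        by_contra hpos
        push_neg at hpos
        obtain ⟨n, hn⟩ := exists_nat_one_div_lt hpos
        exact h n x p.2 hn.le (Prod.ext hx rfl)
      have h0' : infDist x (p.2 : Set X) = 0 := le_antisymm h0 infDist_nonneg
      exact (p.2.isCompact.isClosed.mem_iff_infDist_zero p.2.nonempty).2 h0'
  rw [heq]
  exact MeasurableSet.iInter fun n => (hD n).measurableSet.compl

end Aux

/-- If `C ⊆ K(Q)` is uniquely Polishable, witnessed by Polish spaces `X, Y` and a perfect
map `π : X → Y` such that each member of `C` is homeomorphic to exactly one fiber of `π`,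
then for every Polish subspace `T ⊆ C` the homeomorphism relation restricted to `T`
is smooth. -/
theorem stmt_17 (C : Set (NonemptyCompacts HilbertCube))
    (X Y : Type) [TopologicalSpace X] [TopologicalSpace Y]
    [PolishSpace X] [PolishSpace Y]
    (π : X → Y) (hcont : Continuous π) (hclosed : IsClosedMap π)
    (hsurj : Function.Surjective π) (hfib : ∀ y : Y, IsCompact (π ⁻¹' {y}))
    (huniq : ∀ K ∈ C, ∃! y : Y, Nonempty (↥(π ⁻¹' {y}) ≃ₜ ↥(K : Set HilbertCube)))
    (T : Set (NonemptyCompacts HilbertCube)) (hTC : T ⊆ C) (hT : PolishSpace T) :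
    SmoothRel (fun A B : ↥T =>
      Nonempty (↥((A : NonemptyCompacts HilbertCube) : Set HilbertCube) ≃ₜ
        ↥((B : NonemptyCompacts HilbertCube) : Set HilbertCube))) := by
  classical
  haveI hT' : PolishSpace (↥T) := hT
  letI := upgradeIsCompletelyMetrizable X
  letI := upgradeIsCompletelyMetrizable Y
  borelize Y
  borelize (NonemptyCompacts (HilbertCube × X))
  borelize (NonemptyCompacts X)
  -- the reduction map
  have hmem : ∀ A : ↥T, ((A : NonemptyCompacts HilbertCube)) ∈ C := fun A => hTC A.2
  let φ : ↥T → Y := fun A => (huniq _ (hmem A)).choose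
  have hφ : ∀ A : ↥T, Nonempty (↥(π ⁻¹' {φ A}) ≃ₜ
      ↥((A : NonemptyCompacts HilbertCube) : Set HilbertCube)) :=
    fun A => (huniq _ (hmem A)).choose_spec.1
  have hφu : ∀ (A : ↥T) (y : Y), Nonempty (↥(π ⁻¹' {y}) ≃ₜ
      ↥((A : NonemptyCompacts HilbertCube) : Set HilbertCube)) → y = φ A :=
    fun A => (huniq _ (hmem A)).choose_spec.2
  -- the predicate describing graphs of homeomorphisms
  let P : ↥T → Y → NonemptyCompacts (HilbertCube × X) → Prop := fun A y R =>
    (Prod.fst '' (R : Set (HilbertCube × X)) ⊆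
      ((A : NonemptyCompacts HilbertCube) : Set HilbertCube)) ∧
    (((A : NonemptyCompacts HilbertCube) : Set HilbertCube) ⊆
      Prod.fst '' (R : Set (HilbertCube × X))) ∧
    (∀ x ∈ Prod.snd '' (R : Set (HilbertCube × X)), π x = y) ∧
    (π ⁻¹' {y} ⊆ Prod.snd '' (R : Set (HilbertCube × X))) ∧
    (∀ p ∈ (R : Set (HilbertCube × X)), ∀ q ∈ (R : Set (HilbertCube × X)),
      p.1 = q.1 → p.2 = q.2) ∧
    (∀ p ∈ (R : Set (HilbertCube × X)), ∀ q ∈ (R : Set (HilbertCube × X)),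
      p.2 = q.2 → p.1 = q.1)
  -- P characterizes homeomorphism with the fiber
  have key : ∀ (A : ↥T) (y : Y),
      (∃ R : NonemptyCompacts (HilbertCube × X), P A y R) ↔
      Nonempty (↥(π ⁻¹' {y}) ≃ₜ ↥((A : NonemptyCompacts HilbertCube) : Set HilbertCube)) := by
    intro A y
    constructor
    · rintro ⟨R, h1, h2, h3, h4, h5, h6⟩
      haveI : CompactSpace ↥(R : Set (HilbertCube × X)) :=
        isCompact_iff_compactSpace.mp R.isCompact
      -- map to the fiber
      have hmem1 : ∀ p : ↥(R : Set (HilbertCube × X)), (p : HilbertCube × X).2 ∈ π ⁻¹' {y} := by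
        intro p
        simp only [mem_preimage, mem_singleton_iff]
        exact h3 (p : HilbertCube × X).2 ⟨p, p.2, rfl⟩
      let u : ↥(R : Set (HilbertCube × X)) → ↥(π ⁻¹' {y}) := fun p => ⟨(p : HilbertCube × X).2, hmem1 p⟩
      have hucont : Continuous u :=
        (continuous_snd.comp continuous_subtype_val).subtype_mk _
      have hubij : Function.Bijective u := by
        constructor
        · rintro ⟨p, hp⟩ ⟨q, hq⟩ hpq
          simp only [u, Subtype.mk.injEq] at hpq ⊢
          exact Prod.ext (h6 p hp q hq hpq) hpq
        · rintro ⟨x, hx⟩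
          obtain ⟨p, hp, hpx⟩ := h4 hx
          exact ⟨⟨p, hp⟩, Subtype.ext hpx⟩
      let e1 : ↥(R : Set (HilbertCube × X)) ≃ₜ ↥(π ⁻¹' {y}) :=
        Continuous.homeoOfEquivCompactToT2 (f := Equiv.ofBijective u hubij) hucont
      -- map to A
      have hmem2 : ∀ p : ↥(R : Set (HilbertCube × X)),
          (p : HilbertCube × X).1 ∈ ((A : NonemptyCompacts HilbertCube) : Set HilbertCube) := by
        intro p
        exact h1 ⟨p, p.2, rfl⟩
      let v : ↥(R : Set (HilbertCube × X)) →
          ↥((A : NonemptyCompacts HilbertCube) : Set HilbertCube) := fun p =>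
        ⟨(p : HilbertCube × X).1, hmem2 p⟩
      have hvcont : Continuous v :=
        (continuous_fst.comp continuous_subtype_val).subtype_mk _
      have hvbij : Function.Bijective v := by
        constructor
        · rintro ⟨p, hp⟩ ⟨q, hq⟩ hpq
          simp only [v, Subtype.mk.injEq] at hpq ⊢
          exact Prod.ext hpq (h5 p hp q hq hpq)
        · rintro ⟨a, ha⟩
          obtain ⟨p, hp, hpa⟩ := h2 ha
          exact ⟨⟨p, hp⟩, Subtype.ext hpa⟩
      let e2 : ↥(R : Set (HilbertCube × X)) ≃ₜ
          ↥((A : NonemptyCompacts HilbertCube) : Set HilbertCube) :=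
        Continuous.homeoOfEquivCompactToT2 (f := Equiv.ofBijective v hvbij) hvcont
      exact ⟨e1.symm.trans e2⟩
    · rintro ⟨e⟩
      haveI : CompactSpace ↥(π ⁻¹' {y}) := isCompact_iff_compactSpace.mp (hfib y)
      haveI : Nonempty ↥(π ⁻¹' {y}) := by
        obtain ⟨x0, hx0⟩ := hsurj y
        exact ⟨⟨x0, by simp [hx0]⟩⟩
      let g : ↥(π ⁻¹' {y}) → HilbertCube × X := fun x => (((e x) : HilbertCube), (x : X))
      have hgcont : Continuous g :=
        ((continuous_subtype_val.comp e.continuous).prodMk continuous_subtype_val)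
      refine ⟨⟨⟨Set.range g, isCompact_range hgcont⟩, range_nonempty g⟩, ?_, ?_, ?_, ?_, ?_, ?_⟩
      · rintro a ⟨p, ⟨x, rfl⟩, rfl⟩
        exact (e x).2
      · intro a ha
        refine ⟨g (e.symm ⟨a, ha⟩), mem_range_self _, ?_⟩
        show ((e (e.symm ⟨a, ha⟩)) : HilbertCube) = a
        rw [e.apply_symm_apply]
      · rintro x ⟨p, ⟨z, rfl⟩, rfl⟩
        exact z.2
      · intro x hx
        exact ⟨g ⟨x, hx⟩, mem_range_self _, rfl⟩
      · rintro p ⟨z, rfl⟩ q ⟨z', rfl⟩ hpq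
        simp only [g] at hpq ⊢
        have : e z = e z' := Subtype.ext hpq
        rw [e.injective this]
      · rintro p ⟨z, rfl⟩ q ⟨z', rfl⟩ hpq
        simp only [g] at hpq ⊢
        have : z = z' := Subtype.ext hpq
        rw [this]
  -- measurability of the `P` set
  have hGmeas : MeasurableSet {w : ↥T × Y × NonemptyCompacts (HilbertCube × X) |
      P w.1 w.2.1 w.2.2} := by
    have h1L : LipschitzWith 1 (Prod.fst : HilbertCube × X → HilbertCube) :=
      LipschitzWith.prod_fst
    have h2L : LipschitzWith 1 (Prod.snd : HilbertCube × X → X) :=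
      LipschitzWith.prod_snd
    have hfst := necMap_lipschitz h1L
    have hsnd := necMap_lipschitz h2L
    have c1 : MeasurableSet {w : ↥T × Y × NonemptyCompacts (HilbertCube × X) |
        Prod.fst '' (w.2.2 : Set (HilbertCube × X)) ⊆
        ((w.1 : NonemptyCompacts HilbertCube) : Set HilbertCube)} := by
      have : {w : ↥T × Y × NonemptyCompacts (HilbertCube × X) |
          Prod.fst '' (w.2.2 : Set (HilbertCube × X)) ⊆
          ((w.1 : NonemptyCompacts HilbertCube) : Set HilbertCube)} =
          (fun w : ↥T × Y × NonemptyCompacts (HilbertCube × X) =>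
            (necMap Prod.fst h1L.continuous w.2.2, (w.1 : NonemptyCompacts HilbertCube))) ⁻¹'
          {p : NonemptyCompacts HilbertCube × NonemptyCompacts HilbertCube |
            (p.1 : Set HilbertCube) ⊆ (p.2 : Set HilbertCube)} := rfl
      rw [this]
      exact (aux_isClosed_subsetRel.preimage
        ((hfst.continuous.comp (continuous_snd.comp continuous_snd)).prodMk
          (continuous_subtype_val.comp continuous_fst))).measurableSet
    have c2 : MeasurableSet {w : ↥T × Y × NonemptyCompacts (HilbertCube × X) |
        ((w.1 : NonemptyCompacts HilbertCube) : Set HilbertCube) ⊆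
        Prod.fst '' (w.2.2 : Set (HilbertCube × X))} := by
      have : {w : ↥T × Y × NonemptyCompacts (HilbertCube × X) |
          ((w.1 : NonemptyCompacts HilbertCube) : Set HilbertCube) ⊆
          Prod.fst '' (w.2.2 : Set (HilbertCube × X))} =
          (fun w : ↥T × Y × NonemptyCompacts (HilbertCube × X) =>
            ((w.1 : NonemptyCompacts HilbertCube), necMap Prod.fst h1L.continuous w.2.2)) ⁻¹'
          {p : NonemptyCompacts HilbertCube × NonemptyCompacts HilbertCube |
            (p.1 : Set HilbertCube) ⊆ (p.2 : Set HilbertCube)} := rfl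
      rw [this]
      exact (aux_isClosed_subsetRel.preimage
        ((continuous_subtype_val.comp continuous_fst).prodMk
          (hfst.continuous.comp (continuous_snd.comp continuous_snd)))).measurableSet
    have c3 : MeasurableSet {w : ↥T × Y × NonemptyCompacts (HilbertCube × X) |
        ∀ x ∈ Prod.snd '' (w.2.2 : Set (HilbertCube × X)), π x = w.2.1} := by
      have : {w : ↥T × Y × NonemptyCompacts (HilbertCube × X) |
          ∀ x ∈ Prod.snd '' (w.2.2 : Set (HilbertCube × X)), π x = w.2.1} =
          (fun w : ↥T × Y × NonemptyCompacts (HilbertCube × X) =>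
            (w.2.1, necMap Prod.snd h2L.continuous w.2.2)) ⁻¹'
          {p : Y × NonemptyCompacts X | ∀ x ∈ (p.2 : Set X), π x = p.1} := rfl
      rw [this]
      exact ((aux_isClosed_mapEq hcont).preimage
        ((continuous_fst.comp continuous_snd).prodMk
          (hsnd.continuous.comp (continuous_snd.comp continuous_snd)))).measurableSet
    have hproper : IsProperMap π := isProperMap_iff_isClosedMap_and_compact_fibers.2
      ⟨hcont, hclosed, hfib⟩
    have c4 : MeasurableSet {w : ↥T × Y × NonemptyCompacts (HilbertCube × X) |
        π ⁻¹' {w.2.1} ⊆ Prod.snd '' (w.2.2 : Set (HilbertCube × X))} := by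
      have : {w : ↥T × Y × NonemptyCompacts (HilbertCube × X) |
          π ⁻¹' {w.2.1} ⊆ Prod.snd '' (w.2.2 : Set (HilbertCube × X))} =
          (fun w : ↥T × Y × NonemptyCompacts (HilbertCube × X) =>
            (w.2.1, necMap Prod.snd h2L.continuous w.2.2)) ⁻¹'
          {p : Y × NonemptyCompacts X | π ⁻¹' {p.1} ⊆ (p.2 : Set X)} := rfl
      rw [this]
      exact (aux_measurableSet_fiberSubset hproper).preimage
        (((continuous_fst.comp continuous_snd).prodMk
          (hsnd.continuous.comp (continuous_snd.comp continuous_snd))).measurable)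
    have c5 : MeasurableSet {w : ↥T × Y × NonemptyCompacts (HilbertCube × X) |
        ∀ p ∈ (w.2.2 : Set (HilbertCube × X)), ∀ q ∈ (w.2.2 : Set (HilbertCube × X)),
          p.1 = q.1 → p.2 = q.2} := by
      exact (aux_measurableSet_graphLike
        (continuous_fst : Continuous (Prod.fst : HilbertCube × X → HilbertCube))
        (continuous_snd : Continuous (Prod.snd : HilbertCube × X → X))).preimage
        ((continuous_snd.comp continuous_snd).measurable)
    have c6 : MeasurableSet {w : ↥T × Y × NonemptyCompacts (HilbertCube × X) |
        ∀ p ∈ (w.2.2 : Set (HilbertCube × X)), ∀ q ∈ (w.2.2 : Set (HilbertCube × X)),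
          p.2 = q.2 → p.1 = q.1} := by
      exact (aux_measurableSet_graphLike
        (continuous_snd : Continuous (Prod.snd : HilbertCube × X → X))
        (continuous_fst : Continuous (Prod.fst : HilbertCube × X → HilbertCube))).preimage
        ((continuous_snd.comp continuous_snd).measurable)
    exact (((((c1.inter c2).inter c3).inter c4).inter c5).inter c6).congr (by
      ext w
      simp only [mem_inter_iff, mem_setOf_eq]
      tauto)
  -- measurability of φ
  have hmeas : Measurable φ := by
    intro u hu
    have himg : φ ⁻¹' u =
        (fun w : ↥T × Y × NonemptyCompacts (HilbertCube × X) => w.1) ''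
          ({w | P w.1 w.2.1 w.2.2} ∩ {w | w.2.1 ∈ u}) := by
      ext A
      simp only [mem_preimage, mem_image, mem_inter_iff, mem_setOf_eq]
      constructor
      · intro hA
        obtain ⟨R, hR⟩ := (key A (φ A)).2 (hφ A)
        exact ⟨(A, φ A, R), ⟨hR, hA⟩, rfl⟩
      · rintro ⟨w, ⟨hw, hwu⟩, rfl⟩
        have : w.2.1 = φ w.1 := hφu w.1 w.2.1 ((key w.1 w.2.1).1 ⟨w.2.2, hw⟩)
        rwa [← this]
    have hana : ∀ v : Set Y, MeasurableSet v → MeasureTheory.AnalyticSet (φ ⁻¹' v) := by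
      intro v hv
      have himg' : φ ⁻¹' v =
          (fun w : ↥T × Y × NonemptyCompacts (HilbertCube × X) => w.1) ''
            ({w | P w.1 w.2.1 w.2.2} ∩ {w | w.2.1 ∈ v}) := by
        ext A
        simp only [mem_preimage, mem_image, mem_inter_iff, mem_setOf_eq]
        constructor
        · intro hA
          obtain ⟨R, hR⟩ := (key A (φ A)).2 (hφ A)
          exact ⟨(A, φ A, R), ⟨hR, hA⟩, rfl⟩
        · rintro ⟨w, ⟨hw, hwu⟩, rfl⟩
          have : w.2.1 = φ w.1 := hφu w.1 w.2.1 ((key w.1 w.2.1).1 ⟨w.2.2, hw⟩)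
          rwa [← this]
      rw [himg']
      have hBorel : MeasurableSet ({w : ↥T × Y × NonemptyCompacts (HilbertCube × X) |
          P w.1 w.2.1 w.2.2} ∩ {w | w.2.1 ∈ v}) :=
        hGmeas.inter (hv.preimage (continuous_fst.comp continuous_snd).measurable)
      exact hBorel.analyticSet.image_of_continuous continuous_fst
    have h1 := hana u hu
    have h2 := hana uᶜ hu.compl
    rw [preimage_compl] at h2
    exact h1.measurableSet_of_compl h2
  -- the reduction works
  refine SmoothRel.intro Y inferInstance inferInstance φ hmeas ?_
  intro A B
  constructor
  · rintro ⟨e⟩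
    obtain ⟨eA⟩ := hφ A
    exact hφu B (φ A) ⟨eA.trans e⟩
  · intro h
    obtain ⟨eA⟩ := hφ A
    obtain ⟨eB⟩ := hφ B
    rw [h] at eA
    exact ⟨(eA.symm.trans eB)⟩
end
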